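/- arXiv:1106.5767 — 7 statements merged into one kernel-verified Lean document; each statement's English description precedes it below -/
import Mathlib

section
/- If L₁ = {a^m b^m : m ≥ 1} and L₂ = {c^n d^n : n ≥ 1}, then the ordinary shuffle L₁ ∐ L₂ is not context-free. -/
/-- `IsShuffle x y z` means `z` is an interleaving of `x` and `y`, preserving
the relative order of the letters of each; i.e. `z ∈ x ∐ y` (ordinary shuffle). -/
inductive IsShuffle {α : Type*} : List α → List α → List α → Prop
  | nil : IsShuffle [] [] []
  | left {x y z : List α} (a : α) : IsShuffle x y z → IsShuffle (a :: x) y (a :: z)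
  | right {x y z : List α} (a : α) : IsShuffle x y z → IsShuffle x (a :: y) (a :: z)

/-- The ordinary shuffle of two languages: the union of all shuffles of pairs. -/
def langShuffle {α : Type*} (L₁ L₂ : Language α) : Language α :=
  {z | ∃ x ∈ L₁, ∃ y ∈ L₂, IsShuffle x y z}

namespace CFPump

inductive PTree (T : Type) (N : Type) : Type
  | leaf (t : T)
  | node (A : N) (ts : List (PTree T N))

namespace PTree
variable {T N : Type}

def sym : PTree T N → Symbol T N
  | leaf t => Symbol.terminal t
  | node A _ => Symbol.nonterminal A

def yield : PTree T N → List T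
  | leaf t => [t]
  | node _ ts => (ts.attach.map fun c => yield c.1).flatten
decreasing_by have := List.sizeOf_lt_of_mem c.2; simp; omega

def size : PTree T N → ℕ
  | leaf _ => 1
  | node _ ts => 1 + (ts.attach.map fun c => size c.1).sum
decreasing_by have := List.sizeOf_lt_of_mem c.2; simp; omega

def height : PTree T N → ℕ
  | leaf _ => 0
  | node _ ts => 1 + (ts.attach.map fun c => height c.1).foldr max 0
decreasing_by have := List.sizeOf_lt_of_mem c.2; simp; omega

@[simp] lemma yield_leaf (t : T) : (leaf t : PTree T N).yield = [t] := by rw [yield]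
@[simp] lemma height_leaf (t : T) : (leaf t : PTree T N).height = 0 := by rw [height]
@[simp] lemma size_leaf (t : T) : (leaf t : PTree T N).size = 1 := by rw [size]
@[simp] lemma yield_node (A : N) (ts : List (PTree T N)) :
    (node A ts).yield = (ts.map yield).flatten := by
  rw [yield]; rw [List.attach_map_val]

@[simp] lemma size_node (A : N) (ts : List (PTree T N)) :
    (node A ts).size = 1 + (ts.map size).sum := by
  rw [size]; rw [List.attach_map_val]

@[simp] lemma height_node (A : N) (ts : List (PTree T N)) :
    (node A ts).height = 1 + (ts.map height).foldr max 0 := by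
  rw [height]; rw [List.attach_map_val]

end PTree

end CFPump

namespace CFPump
open PTree

variable {T : Type} {g : ContextFreeGrammar.{0} T}

inductive Valid (g : ContextFreeGrammar.{0} T) : PTree T g.NT → Prop
  | leaf (t : T) : Valid g (.leaf t)
  | node {A : g.NT} {ts : List (PTree T g.NT)} (r : ContextFreeRule T g.NT)
      (hr : r ∈ g.rules) (hin : r.input = A) (hout : r.output = ts.map PTree.sym)
      (hts : ∀ c ∈ ts, Valid g c) : Valid g (.node A ts)

lemma derives_list (ts : List (PTree T g.NT))
    (h : ∀ c ∈ ts, g.Derives [c.sym] (c.yield.map Symbol.terminal)) :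
    g.Derives (ts.map PTree.sym) (((ts.map PTree.yield).flatten).map Symbol.terminal) := by
  induction ts with
  | nil => simp; rfl
  | cons c ts ih =>
    have h1 := h c (by simp)
    have h2 := ih (fun c hc => h c (by simp [hc]))
    simpa using Relation.ReflTransGen.trans
      (h1.append_right (ts.map PTree.sym))
      (h2.append_left (c.yield.map Symbol.terminal))

lemma Valid.derives {tr : PTree T g.NT} (h : Valid g tr) :
    g.Derives [tr.sym] (tr.yield.map Symbol.terminal) := by
  induction h with
  | leaf t => simp only [PTree.sym, yield_leaf, List.map_cons, List.map_nil]; rfl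
  | node r hr hin hout hts ih =>
    rename_i A ts
    have step : g.Produces [Symbol.nonterminal A] (ts.map PTree.sym) := by
      refine ⟨r, hr, ?_⟩
      rw [← hout, ← hin]
      exact ContextFreeRule.Rewrites.input_output
    exact Relation.ReflTransGen.trans step.single (by simpa using derives_list ts ih)

lemma exists_trees {u : List (Symbol T g.NT)} {w : List T}
    (h : g.Derives u (w.map Symbol.terminal)) :
    ∃ ts : List (PTree T g.NT), (∀ c ∈ ts, Valid g c) ∧
      ts.map PTree.sym = u ∧ (ts.map PTree.yield).flatten = w := by
  induction h using Relation.ReflTransGen.head_induction_on with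
  | refl =>
    refine ⟨w.map PTree.leaf, ?_, ?_, ?_⟩
    · intro c hc
      simp only [List.mem_map] at hc
      obtain ⟨t, _, rfl⟩ := hc
      exact Valid.leaf t
    · simp [Function.comp, PTree.sym]
    · induction w with
      | nil => simp
      | cons a w ih => simpa using ih
  | head hp _ ih =>
    obtain ⟨ts, hvalid, hsym, hyield⟩ := ih
    obtain ⟨r, hr, hrw⟩ := hp
    obtain ⟨p, q, hu, hv⟩ := hrw.exists_parts
    rw [hv] at hsym
    -- split ts into three parts matching p, r.output, q
    obtain ⟨ts12, ts3, h1, h12, hts3⟩ := List.map_eq_append_iff.mp hsym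
    obtain ⟨ts1, ts2, h2, hts1, hts2⟩ := List.map_eq_append_iff.mp h12
    refine ⟨ts1 ++ [PTree.node r.input ts2] ++ ts3, ?_, ?_, ?_⟩
    · intro c hc
      simp only [List.mem_append, List.mem_singleton] at hc
      rcases hc with (hc | rfl) | hc
      · exact hvalid c (by simp [h1, h2, hc])
      · exact Valid.node r hr rfl hts2.symm (fun c hc => hvalid c (by simp [h1, h2, hc]))
      · exact hvalid c (by simp [h1, hc])
    · simp [hu, hts1, hts3, PTree.sym]
    · rw [← hyield, h1, h2]; simp

/-- `Ctx t u s z` : `s` is a subtree of `t`, with surrounding yield `u`, `z`. -/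
inductive Ctx {T N : Type} : PTree T N → List T → PTree T N → List T → Prop
  | refl (t : PTree T N) : Ctx t [] t []
  | step {A : N} {l r : List (PTree T N)} {c s : PTree T N} {u z : List T} :
      Ctx c u s z →
      Ctx (.node A (l ++ c :: r)) ((l.map PTree.yield).flatten ++ u) s
        (z ++ (r.map PTree.yield).flatten)

lemma mem_le_foldr_max {l : List ℕ} {a : ℕ} (h : a ∈ l) : a ≤ l.foldr max 0 := by
  induction l with
  | nil => simp at h
  | cons b l ih =>
    rcases List.mem_cons.mp h with rfl | h
    · exact le_max_left _ _
    · exact le_trans (ih h) (le_max_right _ _)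

lemma Ctx.yield_eq {t s : PTree T g.NT} {u z : List T} (h : Ctx t u s z) :
    t.yield = u ++ s.yield ++ z := by
  induction h with
  | refl t => simp
  | step hc ih => simp [ih]

lemma Ctx.trans {t s s' : PTree T g.NT} {u z u' z' : List T}
    (h1 : Ctx t u s z) (h2 : Ctx s u' s' z') : Ctx t (u ++ u') s' (z' ++ z) := by
  induction h1 with
  | refl t => simpa using h2
  | @step A l r c s0 u0 z0 hc ih =>
    have := Ctx.step (A := A) (l := l) (r := r) (ih h2)
    simpa using this

lemma Ctx.valid {t s : PTree T g.NT} {u z : List T} (h : Ctx t u s z)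
    (hv : Valid g t) : Valid g s := by
  induction h with
  | refl t => exact hv
  | step hc ih =>
    cases hv with
    | node r hr hin hout hts => exact ih (hts _ (by simp))

lemma Ctx.height_le {t s : PTree T g.NT} {u z : List T} (h : Ctx t u s z) :
    s.height ≤ t.height := by
  induction h with
  | refl t => exact le_rfl
  | @step A l r c s0 u0 z0 hc ih =>
    refine ih.trans ?_
    have : c.height ≤ ((l ++ c :: r).map PTree.height).foldr max 0 := by
      have hm : c.height ∈ (l ++ c :: r).map PTree.height := by simp
      exact mem_le_foldr_max hm
    simp only [height_node]
    omega

lemma Ctx.derives {t s : PTree T g.NT} {u z : List T} (h : Ctx t u s z)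
    (hv : Valid g t) :
    g.Derives [t.sym] (u.map Symbol.terminal ++ [s.sym] ++ z.map Symbol.terminal) := by
  induction h with
  | refl t => simpa using Relation.ReflTransGen.refl
  | step hc ih =>
    rename_i A l r c s u z
    cases hv with
    | node rr hr hin hout hts =>
      have step1 : g.Produces [Symbol.nonterminal A] ((l ++ c :: r).map PTree.sym) := by
        refine ⟨rr, hr, ?_⟩
        rw [← hout, ← hin]
        exact ContextFreeRule.Rewrites.input_output
      have hdl : g.Derives (l.map PTree.sym)
          (((l.map PTree.yield).flatten).map Symbol.terminal) :=
        derives_list l (fun c hc => (hts c (by simp [hc])).derives)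
      have hdr : g.Derives (r.map PTree.sym)
          (((r.map PTree.yield).flatten).map Symbol.terminal) :=
        derives_list r (fun c hc => (hts c (by simp [hc])).derives)
      have hdc : g.Derives [c.sym]
          (u.map Symbol.terminal ++ [s.sym] ++ z.map Symbol.terminal) :=
        ih (hts c (by simp))
      have comb : g.Derives ((l ++ c :: r).map PTree.sym)
          (((l.map PTree.yield).flatten).map Symbol.terminal ++
            (u.map Symbol.terminal ++ [s.sym] ++ z.map Symbol.terminal) ++
            ((r.map PTree.yield).flatten).map Symbol.terminal) := by
        have e1 : (l ++ c :: r).map PTree.sym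
            = l.map PTree.sym ++ ([c.sym] ++ r.map PTree.sym) := by simp
        rw [e1]
        refine Relation.ReflTransGen.trans (hdl.append_right _)
          (Relation.ReflTransGen.trans
            (b := (l.map PTree.yield).flatten.map Symbol.terminal ++
              ((u.map Symbol.terminal ++ [s.sym] ++ z.map Symbol.terminal) ++
                r.map PTree.sym)) ?_ ?_)
        · exact ((hdc.append_right _).append_left _)
        · have := (hdr.append_left ((l.map PTree.yield).flatten.map Symbol.terminal ++
            (u.map Symbol.terminal ++ [s.sym] ++ z.map Symbol.terminal)))
          simpa [List.append_assoc] using this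
      refine Relation.ReflTransGen.trans step1.single ?_
      refine comb.trans ?_
      simp only [List.map_append, List.map_flatten, List.append_assoc, List.map_cons,
        List.singleton_append, List.map_nil]
      exact Relation.ReflTransGen.refl

lemma Ctx.replace {t s : PTree T g.NT} {u z : List T} (h : Ctx t u s z)
    (hv : Valid g t) (s' : PTree T g.NT) (hv' : Valid g s') (hsym : s'.sym = s.sym) :
    ∃ t', Valid g t' ∧ t'.sym = t.sym ∧ t'.yield = u ++ s'.yield ++ z ∧
      t'.size + s.size = t.size + s'.size := by
  induction h with
  | refl t => exact ⟨s', hv', hsym, by simp, by omega⟩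
  | @step A l r c s0 u0 z0 hc ih =>
    cases hv with
    | node rr hr hin hout hts =>
      obtain ⟨c', hc'v, hc'sym, hc'yield, hc'size⟩ := ih (hts c (by simp)) hsym
      refine ⟨.node A (l ++ c' :: r), ?_, by simp [PTree.sym], ?_, ?_⟩
      · exact Valid.node rr hr hin (by simpa [hc'sym] using hout)
          (by
            intro d hd
            rcases List.mem_append.mp hd with hd | hd
            · exact hts d (by simp [hd])
            · rcases List.mem_cons.mp hd with rfl | hd
              · exact hc'v
              · exact hts d (by simp [hd]))
      · simp [hc'yield]
      · simp only [size_node, List.map_append, List.map_cons, List.sum_append,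
          List.sum_cons]
        omega

/-- every subtree's yield length is at most `M ^ height`, provided every rule's
output has length at most `M` and `M ≥ 1`. -/
lemma yield_len_le {M : ℕ} (hM : 1 ≤ M) (hrules : ∀ r ∈ g.rules, r.output.length ≤ M)
    {t : PTree T g.NT} (hv : Valid g t) : t.yield.length ≤ M ^ t.height := by
  induction hv with
  | leaf t => simp
  | @node A ts r hr hin hout hts ih =>
    have hlen : ts.length ≤ M := by
      have := hrules r hr
      rw [hout] at this
      simpa using this
    have hchild : ∀ c ∈ ts, c.yield.length ≤ M ^ ((ts.map PTree.height).foldr max 0) := by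
      intro c hcm
      refine (ih c hcm).trans (Nat.pow_le_pow_right hM ?_)
      exact mem_le_foldr_max (by simp; exact ⟨c, hcm, rfl⟩)
    calc (PTree.node A ts).yield.length
        = ((ts.map PTree.yield).map List.length).sum := by simp
      _ ≤ ts.length * M ^ ((ts.map PTree.height).foldr max 0) := by
          rw [List.map_map]
          have h := List.sum_le_card_nsmul (ts.map (List.length ∘ PTree.yield))
            (M ^ ((ts.map PTree.height).foldr max 0)) (by
              intro x hx
              simp only [List.mem_map, Function.comp] at hx
              obtain ⟨c, hcm, rfl⟩ := hx
              exact hchild c hcm)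
          simpa [smul_eq_mul] using h
      _ ≤ M * M ^ ((ts.map PTree.height).foldr max 0) :=
          Nat.mul_le_mul_right _ hlen
      _ = M ^ (PTree.node A ts).height := by rw [height_node]; ring

lemma size_pos (t : PTree T g.NT) : 1 ≤ t.size := by
  cases t with
  | leaf t => simp
  | node A ts => simp

lemma exists_max_child {ts : List (PTree T g.NT)} (hne : (ts.map PTree.height).foldr max 0 ≠ 0 ∨ ts ≠ []) :
    ∃ c ∈ ts, c.height = (ts.map PTree.height).foldr max 0 := by
  induction ts with
  | nil => simp at hne
  | cons c ts ih =>
    by_cases hc : (ts.map PTree.height).foldr max 0 ≤ c.height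
    · exact ⟨c, by simp, by simp [max_eq_left hc]⟩
    · have hne' : (ts.map PTree.height).foldr max 0 ≠ 0 ∨ ts ≠ [] := by
        left; omega
      obtain ⟨d, hd, hdh⟩ := ih hne'
      refine ⟨d, by simp [hd], ?_⟩
      simp only [List.map_cons, List.foldr_cons]
      omega

/-- descend to a subtree of any prescribed positive height. -/
lemma exists_ctx_height {t : PTree T g.NT} (hv : Valid g t) :
    ∀ j, 1 ≤ j → j ≤ t.height → ∃ s u z, Ctx t u s z ∧ s.height = j := by
  induction hv with
  | leaf t => intro j h1 h2; simp [PTree.height] at h2; omega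
  | @node A ts r hr hin hout hts ih =>
    intro j h1 h2
    rcases eq_or_lt_of_le h2 with heq | hlt
    · exact ⟨_, [], [], Ctx.refl _, heq.symm⟩
    · -- j < height, so the max child has height = height - 1 ≥ j ≥ 1
      rw [height_node] at hlt
      have hfold : (ts.map PTree.height).foldr max 0 ≠ 0 := by omega
      obtain ⟨c, hcm, hch⟩ := exists_max_child (Or.inl hfold)
      obtain ⟨l, rr, rfl⟩ := List.append_of_mem hcm
      obtain ⟨s, u, z, hctx, hsh⟩ := ih c (by simp) j h1 (by omega)
      exact ⟨s, _, _, Ctx.step hctx, hsh⟩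

/-- descending chains of children, collecting node labels (of all trees strictly
above the endpoint). -/
inductive Desc {T N : Type} : PTree T N → List N → PTree T N → Prop
  | refl (t : PTree T N) : Desc t [] t
  | step {A : N} {ts : List (PTree T N)} {c s : PTree T N} {ls : List N} :
      c ∈ ts → Desc c ls s → Desc (.node A ts) (A :: ls) s

lemma Desc.to_ctx {t s : PTree T g.NT} {ls : List g.NT} (h : Desc t ls s) :
    ∃ u z, Ctx t u s z := by
  induction h with
  | refl t => exact ⟨[], [], Ctx.refl t⟩
  | @step A ts c s ls hc hd ih =>
    obtain ⟨u, z, hctx⟩ := ih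
    obtain ⟨l, r, rfl⟩ := List.append_of_mem hc
    exact ⟨_, _, Ctx.step hctx⟩

lemma Desc.split {t s : PTree T g.NT} {p q : List g.NT} (h : Desc t (p ++ q) s) :
    ∃ m, Desc t p m ∧ Desc m q s := by
  induction p generalizing t with
  | nil => exact ⟨t, Desc.refl t, by simpa using h⟩
  | cons A p ih =>
    cases h with
    | step hc hd =>
      obtain ⟨m, h1, h2⟩ := ih hd
      exact ⟨m, Desc.step hc h1, h2⟩

lemma Desc.size_lt {t s : PTree T g.NT} {A : g.NT} {ls : List g.NT}
    (h : Desc t (A :: ls) s) : s.size < t.size := by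
  have size_le : ∀ {t s : PTree T g.NT} {ls : List g.NT}, Desc t ls s → s.size ≤ t.size := by
    intro t s ls h
    induction h with
    | refl t => exact le_rfl
    | @step B ts c s ls hc hd ih =>
      refine ih.trans ?_
      have : c.size ≤ (ts.map PTree.size).sum := List.le_sum_of_mem (by simp; exact ⟨c, hc, rfl⟩)
      simp only [size_node]
      omega
  cases h with
  | @step B ts c s ls hc hd =>
    have h1 : s.size ≤ c.size := size_le hd
    have h2 : c.size ≤ (ts.map PTree.size).sum := List.le_sum_of_mem (by simp; exact ⟨c, hc, rfl⟩)
    simp only [size_node]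
    omega

lemma Desc.head_node {t s : PTree T g.NT} {A : g.NT} {ls : List g.NT}
    (h : Desc t (A :: ls) s) : ∃ ts, t = PTree.node A ts := by
  cases h with
  | step hc hd => exact ⟨_, rfl⟩

noncomputable def inputsList (g : ContextFreeGrammar.{0} T) : List g.NT :=
  g.rules.toList.map (·.input)

lemma Desc.labels_mem {t s : PTree T g.NT} {ls : List g.NT}
    (h : Desc t ls s) (hv : Valid g t) : ∀ A ∈ ls, A ∈ inputsList g := by
  induction h with
  | refl t => simp
  | @step B ts c s ls hc hd ih =>
    intro A hA
    cases hv with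
    | node r hr hin hout hts =>
      rcases List.mem_cons.mp hA with rfl | hA
      · exact List.mem_map.mpr ⟨r, by simpa using hr, hin⟩
      · exact ih (hts c hc) A hA

/-- build a descending chain of length `j` with heights dropping by exactly one. -/
lemma exists_desc_chain {t : PTree T g.NT} (hv : Valid g t) :
    ∀ j, j + 1 ≤ t.height → ∃ ls s, Desc t ls s ∧ ls.length = j ∧
      s.height = t.height - j ∧ Valid g s := by
  induction hv with
  | leaf t => intro j h; simp at h
  | @node A ts r hr hin hout hts ih =>
    intro j hj
    cases j with
    | zero => exact ⟨[], _, Desc.refl _, rfl, by omega, Valid.node r hr hin hout hts⟩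
    | succ j =>
      rw [height_node] at hj
      have hfold : (ts.map PTree.height).foldr max 0 ≠ 0 := by omega
      obtain ⟨c, hcm, hch⟩ := exists_max_child (Or.inl hfold)
      obtain ⟨ls, s, hd, hlen, hsh, hsv⟩ := ih c hcm j (by omega)
      refine ⟨A :: ls, s, Desc.step hcm hd, by simp [hlen], ?_, hsv⟩
      rw [height_node]
      omega

lemma dup_split {α : Type} {l : List α} (h : ¬ l.Nodup) :
    ∃ l1 : List α, ∃ a : α, ∃ l2 l3 : List α, l = l1 ++ a :: l2 ++ a :: l3 := by
  obtain ⟨x, hx⟩ := List.exists_duplicate_iff_not_nodup.mpr h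
  rw [List.duplicate_iff_sublist] at hx
  clear h
  induction l with
  | nil => simp at hx
  | cons b l ih =>
    cases hx with
    | cons _ hx' =>
      obtain ⟨l1, a, l2, l3, rfl⟩ := ih hx'
      exact ⟨b :: l1, a, l2, l3, by simp⟩
    | cons_cons _ hx' =>
      have hmem : x ∈ l := hx'.subset (by simp)
      obtain ⟨l2, l3, rfl⟩ := List.append_of_mem hmem
      exact ⟨[], x, l2, l3, by simp⟩

lemma nodup_length_le {α : Type} [DecidableEq α] {L S : List α} (h : L.Nodup)
    (hsub : L ⊆ S) : L.length ≤ S.dedup.length := by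
  have h1 : L.toFinset.card = L.length := List.toFinset_card_of_nodup h
  have h2 : L.toFinset ⊆ S.toFinset :=
    fun x hx => List.mem_toFinset.mpr (hsub (List.mem_toFinset.mp hx))
  have h3 : S.toFinset.card = S.dedup.length := List.card_toFinset S
  have := Finset.card_le_card h2
  omega

/-- In a valid tree of height exactly `KD+1` (where `KD` is the number of distinct
nonterminals occurring as rule inputs), there is a repeated nonterminal pair. -/
lemma exists_pump_pair [DecidableEq g.NT] {t1 : PTree T g.NT} (hv : Valid g t1)
    (hh : t1.height = (inputsList g).dedup.length + 1) :
    ∃ M1 M2 : PTree T g.NT, ∃ u1 z1 v y : List T,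
      Ctx t1 u1 M1 z1 ∧ Ctx M1 v M2 y ∧ M2.size < M1.size ∧ M1.sym = M2.sym := by
  set KD := (inputsList g).dedup.length with hKD
  obtain ⟨ls, s, hdesc, hlen, hsh, hsv⟩ := exists_desc_chain hv KD (by omega)
  rw [hh] at hsh
  have hsh1 : s.height = 1 := by omega
  obtain ⟨As, tss, rfl⟩ : ∃ As tss, s = PTree.node As tss := by
    cases s with
    | leaf t => simp at hsh1
    | node As tss => exact ⟨As, tss, rfl⟩
  have hAs : As ∈ inputsList g := by
    cases hsv with
    | node r hr hin hout hts => exact List.mem_map.mpr ⟨r, by simpa using hr, hin⟩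
  set L : List g.NT := ls ++ [As] with hL
  have hLlen : L.length = KD + 1 := by simp [hL, hlen]
  have hLsub : L ⊆ inputsList g := by
    intro a ha
    rcases List.mem_append.mp ha with ha | ha
    · exact hdesc.labels_mem hv a ha
    · simpa using (List.mem_singleton.mp ha) ▸ hAs
  have hnd : ¬ L.Nodup := by
    intro hnd
    have := nodup_length_le hnd hLsub
    omega
  obtain ⟨l1, A, l2, l3, hsplit⟩ := dup_split hnd
  rcases List.eq_nil_or_concat l3 with rfl | ⟨l3', w, rfl⟩
  · -- second occurrence is the last element: As = A, ls = l1 ++ A :: l2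
    have h2 : ls ++ [As] = (l1 ++ A :: l2) ++ [A] := by simpa using hsplit
    obtain ⟨hls, hAs2⟩ := List.append_inj' h2 rfl
    have hAsA : As = A := by simpa using hAs2
    rw [hls] at hdesc
    obtain ⟨M1, hd1, hd2⟩ := Desc.split (by simpa using hdesc)
    obtain ⟨u1, z1, hctx1⟩ := hd1.to_ctx
    obtain ⟨v, y, hctx2⟩ := hd2.to_ctx
    obtain ⟨ts1, rfl⟩ := hd2.head_node
    exact ⟨_, _, u1, z1, v, y, hctx1, hctx2, hd2.size_lt, by simp [PTree.sym, hAsA]⟩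
  · -- both occurrences inside ls
    have h2 : ls ++ [As] = (l1 ++ A :: l2 ++ A :: l3') ++ [w] := by simpa using hsplit
    obtain ⟨hls, hw⟩ := List.append_inj' h2 rfl
    rw [hls] at hdesc
    have hdesc' : Desc t1 (l1 ++ ((A :: l2) ++ (A :: l3'))) (PTree.node As tss) := by
      simpa using hdesc
    obtain ⟨M1, hd1, hd23⟩ := Desc.split hdesc'
    obtain ⟨M2, hd2, hd3⟩ := Desc.split hd23
    obtain ⟨u1, z1, hctx1⟩ := hd1.to_ctx
    obtain ⟨v, y, hctx2⟩ := hd2.to_ctx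
    obtain ⟨ts1, rfl⟩ := hd2.head_node
    obtain ⟨ts2, rfl⟩ := hd3.head_node
    exact ⟨_, _, u1, z1, v, y, hctx1, hctx2, hd2.size_lt, by simp [PTree.sym]⟩

lemma Derives.sandwich {a b p q : List (Symbol T g.NT)} (h : g.Derives a b) :
    g.Derives (p ++ a ++ q) (p ++ b ++ q) := by
  have := (h.append_right q).append_left p
  simpa [List.append_assoc] using this

theorem pump_main [DecidableEq g.NT] {M : ℕ} (hM2 : 2 ≤ M)
    (hrules : ∀ r ∈ g.rules, r.output.length ≤ M) :
    ∀ n (t0 : PTree T g.NT), t0.size ≤ n → Valid g t0 →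
    M ^ ((inputsList g).dedup.length + 1) < t0.yield.length →
    ∃ u v x y z : List T,
      t0.yield = u ++ v ++ x ++ y ++ z ∧
      v.length + x.length + y.length ≤ M ^ ((inputsList g).dedup.length + 1) ∧
      v ++ y ≠ [] ∧
      g.Derives [t0.sym] ((u ++ v ++ v ++ x ++ y ++ y ++ z).map Symbol.terminal) := by
  intro n
  induction n with
  | zero => intro t0 hs; have := size_pos t0; omega
  | succ n ih =>
    intro t0 hsize hv hlong
    set KD := (inputsList g).dedup.length with hKD
    have hM1 : 1 ≤ M := by omega
    have hyb : t0.yield.length ≤ M ^ t0.height := yield_len_le hM1 hrules hv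
    have hh : KD + 1 < t0.height := by
      have : M ^ (KD + 1) < M ^ t0.height := lt_of_lt_of_le hlong hyb
      exact (Nat.pow_lt_pow_iff_right (by omega)).mp this
    obtain ⟨t1, U1, Z1, hctx0, hT1h⟩ := exists_ctx_height hv (KD + 1) (by omega) (by omega)
    have hT1v : Valid g t1 := hctx0.valid hv
    obtain ⟨M1, M2, u1, z1, v, y, hctx1, hctx2, hslt, hsym⟩ := exists_pump_pair hT1v hT1h
    have hM1v : Valid g M1 := hctx1.valid hT1v
    have hM2v : Valid g M2 := hctx2.valid hM1v
    have hy1 : t1.yield = u1 ++ M1.yield ++ z1 := hctx1.yield_eq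
    have hy2 : M1.yield = v ++ M2.yield ++ y := hctx2.yield_eq
    have hy0 : t0.yield = U1 ++ t1.yield ++ Z1 := hctx0.yield_eq
    by_cases hvy : v ++ y = []
    · -- degenerate: replace M1 by M2 and recurse
      obtain ⟨hv0, hy0'⟩ := List.append_eq_nil_iff.mp hvy
      have hyeq : M1.yield = M2.yield := by simp [hy2, hv0, hy0']
      have hctxall : Ctx t0 (U1 ++ u1) M1 (z1 ++ Z1) := hctx0.trans hctx1
      obtain ⟨t', hval', hsym', hyield', hsize'⟩ :=
        hctxall.replace hv M2 hM2v hsym.symm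
      have hyt' : t'.yield = t0.yield := by
        rw [hyield', hy0, hy1, hyeq]
        simp [List.append_assoc]
      have hst' : t'.size ≤ n := by omega
      obtain ⟨u, vv, x, yy, z, e1, e2, e3, e4⟩ := ih t' hst' hval' (by rw [hyt']; exact hlong)
      exact ⟨u, vv, x, yy, z, by rw [← hyt']; exact e1, e2, e3, by rw [← hsym']; exact e4⟩
    · -- real pumping
      have hlen : v.length + M2.yield.length + y.length ≤ M ^ (KD + 1) := by
        have h1 : M1.yield.length ≤ M ^ M1.height := yield_len_le hM1 hrules hM1v
        have h2 : M1.height ≤ t1.height := hctx1.height_le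
        have h3 : M ^ M1.height ≤ M ^ (KD + 1) := by
          apply Nat.pow_le_pow_right hM1; omega
        have h4 : M1.yield.length = v.length + M2.yield.length + y.length := by
          rw [hy2]; simp; omega
        omega
      refine ⟨U1 ++ u1, v, M2.yield, y, z1 ++ Z1, ?_, hlen, hvy, ?_⟩
      · rw [hy0, hy1, hy2]; simp [List.append_assoc]
      · have hd0 := hctx0.derives hv
        have hd1 := hctx1.derives hT1v
        have hd2 : g.Derives [M1.sym]
            (v.map Symbol.terminal ++ [M1.sym] ++ y.map Symbol.terminal) := by
          have := hctx2.derives hM1v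
          rwa [← hsym] at this
        have hd3 : g.Derives [M1.sym] (M2.yield.map Symbol.terminal) := by
          have := hM2v.derives
          rwa [← hsym] at this
        have hd4 : g.Derives [M1.sym]
            ((v.map Symbol.terminal) ++ ((v.map Symbol.terminal) ++
              (M2.yield.map Symbol.terminal) ++ (y.map Symbol.terminal)) ++
              (y.map Symbol.terminal)) := by
          refine hd2.trans (Relation.ReflTransGen.trans
            (b := (v.map Symbol.terminal) ++ ((v.map Symbol.terminal) ++ [M1.sym] ++
              (y.map Symbol.terminal)) ++ (y.map Symbol.terminal))
            (Derives.sandwich hd2) (Derives.sandwich (Derives.sandwich hd3)))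
        have hd5 := hd1.trans (Derives.sandwich hd4)
        have hd6 := hd0.trans (Derives.sandwich hd5)
        simpa [List.map_append, List.append_assoc] using hd6


lemma isShuffle_nil_left {α : Type*} (y : List α) : IsShuffle [] y y := by
  induction y with
  | nil => exact IsShuffle.nil
  | cons a y ih => exact IsShuffle.right a ih

lemma isShuffle_left_prepend {α : Type*} {x y z : List α} (l : List α)
    (h : IsShuffle x y z) : IsShuffle (l ++ x) y (l ++ z) := by
  induction l with
  | nil => simpa using h
  | cons a l ih => exact IsShuffle.left a ih

lemma isShuffle_right_prepend {α : Type*} {x y z : List α} (l : List α)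
    (h : IsShuffle x y z) : IsShuffle x (l ++ y) (l ++ z) := by
  induction l with
  | nil => simpa using h
  | cons a l ih => exact IsShuffle.right a ih

lemma isShuffle_count {α : Type*} [DecidableEq α] {x y z : List α}
    (h : IsShuffle x y z) (a : α) : z.count a = x.count a + y.count a := by
  induction h with
  | nil => simp
  | left b _ ih => by_cases hb : b = a <;> simp [List.count_cons, ih, hb] <;> omega
  | right b _ ih => by_cases hb : b = a <;> simp [List.count_cons, ih, hb] <;> omega

end CFPump

namespace CFPump

def wblocks (p : ℕ) : List (Fin 4) :=
  List.replicate p 0 ++ List.replicate p 2 ++ List.replicate p 1 ++ List.replicate p 3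

lemma wget {p k : ℕ} {a : Fin 4} (h : (wblocks p)[k]? = some a) :
    (a = 0 → k < p) ∧ (a = 1 → 2*p ≤ k ∧ k < 3*p) ∧
    (a = 2 → p ≤ k ∧ k < 2*p) ∧ (a = 3 → 3*p ≤ k) := by
  unfold wblocks at h
  rcases Nat.lt_or_ge k p with h1 | h1
  · rw [List.getElem?_append_left (by simp; omega),
      List.getElem?_append_left (by simp; omega),
      List.getElem?_append_left (by simpa using h1),
      List.getElem?_replicate] at h
    simp [h1] at h
    subst h
    exact ⟨fun _ => h1, fun h' => absurd h'.symm (by decide),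
      fun h' => absurd h'.symm (by decide), fun h' => absurd h'.symm (by decide)⟩
  rcases Nat.lt_or_ge k (2*p) with h2 | h2
  · rw [List.getElem?_append_left (by simp; omega),
      List.getElem?_append_left (by simp; omega),
      List.getElem?_append_right (by simpa using h1),
      List.getElem?_replicate] at h
    simp only [List.length_replicate] at h
    rw [if_pos (by omega)] at h
    simp at h
    subst h
    exact ⟨fun h' => absurd h'.symm (by decide), fun h' => absurd h'.symm (by decide),
      fun _ => ⟨h1, h2⟩, fun h' => absurd h'.symm (by decide)⟩
  rcases Nat.lt_or_ge k (3*p) with h3 | h3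
  · rw [List.getElem?_append_left (by simp; omega),
      List.getElem?_append_right (by simp; omega),
      List.getElem?_replicate] at h
    simp only [List.length_append, List.length_replicate] at h
    rw [if_pos (by omega)] at h
    simp at h
    subst h
    exact ⟨fun h' => absurd h'.symm (by decide), fun _ => ⟨h2, h3⟩,
      fun h' => absurd h'.symm (by decide), fun h' => absurd h'.symm (by decide)⟩
  rcases Nat.lt_or_ge k (4*p) with h4 | h4
  · rw [List.getElem?_append_right (by simp; omega),
      List.getElem?_replicate] at h
    simp only [List.length_append, List.length_replicate] at h
    rw [if_pos (by omega)] at h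
    simp at h
    subst h
    exact ⟨fun h' => absurd h'.symm (by decide), fun h' => absurd h'.symm (by decide),
      fun h' => absurd h'.symm (by decide), fun _ => h3⟩
  · rw [List.getElem?_eq_none (by simp; omega)] at h
    simp at h

lemma idx_window {α : Type*} {w u s zz : List α} (hw : w = u ++ (s ++ zz)) {a : α}
    (ha : a ∈ s) : ∃ i < s.length, w[u.length + i]? = some a := by
  obtain ⟨i, hi, hsi⟩ := List.getElem_of_mem ha
  refine ⟨i, hi, ?_⟩
  subst hw
  rw [List.getElem?_append_right (by omega)]
  have : u.length + i - u.length = i := by omega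
  rw [this, List.getElem?_append_left hi, List.getElem?_eq_getElem hi, hsi]

end CFPump

open CFPump

/-- With alphabet `Fin 4` (`a = 0`, `b = 1`, `c = 2`, `d = 3`): the ordinary
shuffle of `L₁ = {aᵐ bᵐ : m ≥ 1}` and `L₂ = {cⁿ dⁿ : n ≥ 1}` is not
context-free. -/
theorem shuffle_anbn_cndn_not_contextFree :
    ¬ Language.IsContextFree (langShuffle
      {w : List (Fin 4) | ∃ m : ℕ, 1 ≤ m ∧ w = List.replicate m 0 ++ List.replicate m 1}
      {w : List (Fin 4) | ∃ n : ℕ, 1 ≤ n ∧ w = List.replicate n 2 ++ List.replicate n 3}) := by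
  rintro ⟨g, hg⟩
  classical
  set L := langShuffle
      {w : List (Fin 4) | ∃ m : ℕ, 1 ≤ m ∧ w = List.replicate m 0 ++ List.replicate m 1}
      {w : List (Fin 4) | ∃ n : ℕ, 1 ≤ n ∧ w = List.replicate n 2 ++ List.replicate n 3}
    with hL
  set M : ℕ := (g.rules.sup fun r => r.output.length) + 2 with hM
  have hM2 : 2 ≤ M := by omega
  have hrules : ∀ r ∈ g.rules, r.output.length ≤ M := by
    intro r hr
    have h' := Finset.le_sup (f := fun r : ContextFreeRule (Fin 4) g.NT => r.output.length) hr
    omega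
  set p : ℕ := M ^ ((inputsList g).dedup.length + 1) with hp
  have hp2 : 2 ≤ p := le_trans hM2 (Nat.le_self_pow (by omega) M)
  set w : List (Fin 4) := wblocks p with hw
  -- w ∈ L
  have hwL : w ∈ L := by
    refine ⟨List.replicate p 0 ++ List.replicate p 1, ⟨p, by omega, rfl⟩,
      List.replicate p 2 ++ List.replicate p 3, ⟨p, by omega, rfl⟩, ?_⟩
    have h1 : IsShuffle (List.replicate p (1 : Fin 4)) (List.replicate p (3 : Fin 4))
        (List.replicate p (1 : Fin 4) ++ List.replicate p (3 : Fin 4)) := by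
      simpa using isShuffle_left_prepend (List.replicate p (1 : Fin 4))
        (isShuffle_nil_left (List.replicate p (3 : Fin 4)))
    have h2 := isShuffle_right_prepend (List.replicate p (2 : Fin 4)) h1
    have h3 := isShuffle_left_prepend (List.replicate p (0 : Fin 4)) h2
    simpa [hw, wblocks, List.append_assoc] using h3
  -- get a parse tree for w
  have hwg : g.Derives [Symbol.nonterminal g.initial] (w.map Symbol.terminal) := by
    have : w ∈ g.language := by rw [hg]; exact hwL
    exact this
  obtain ⟨ts, hval, hsym, hyield⟩ := exists_trees hwg
  obtain ⟨t0, rfl⟩ : ∃ t0, ts = [t0] := by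
    cases ts with
    | nil => simp at hsym
    | cons t0 ts' =>
      cases ts' with
      | nil => exact ⟨t0, rfl⟩
      | cons _ _ => simp at hsym
  have ht0sym : t0.sym = Symbol.nonterminal g.initial := by simpa using hsym
  have ht0yield : t0.yield = w := by simpa using hyield
  have ht0v : Valid g t0 := hval t0 (by simp)
  have hwlen : w.length = 4 * p := by simp [hw, wblocks]; ring
  have hlong : p < t0.yield.length := by rw [ht0yield, hwlen]; omega
  obtain ⟨u, v, x, y, zz, hdec, hlen, hne, hder⟩ :=
    pump_main hM2 hrules t0.size t0 le_rfl ht0v hlong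
  rw [ht0yield] at hdec
  -- the pumped word is in L
  have hw2 : (u ++ v ++ v ++ x ++ y ++ y ++ zz) ∈ L := by
    rw [← hg]
    show g.Derives _ _
    rw [← ht0sym]
    exact hder
  obtain ⟨x1, ⟨m, hm, rfl⟩, y1, ⟨nn, hn, rfl⟩, hsh⟩ := hw2
  -- counts
  have hcnt := fun a => isShuffle_count hsh a
  have hwcnt : ∀ a : Fin 4, (u ++ v ++ v ++ x ++ y ++ y ++ zz).count a
      = w.count a + (v.count a + y.count a) := by
    intro a
    rw [hdec]
    simp [List.count_append]
    ring
  have hne01 : ((0:Fin 4) ≠ 1) := by decide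
  have key : ∀ a : Fin 4, w.count a + (v.count a + y.count a)
      = (List.replicate m (0:Fin 4) ++ List.replicate m 1).count a
        + (List.replicate nn (2:Fin 4) ++ List.replicate nn 3).count a := by
    intro a
    rw [← hwcnt a, hcnt a]
  have hwc0 : w.count 0 = p := by
    simp [hw, wblocks, List.count_append, List.count_replicate]
  have hwc1 : w.count 1 = p := by
    simp [hw, wblocks, List.count_append, List.count_replicate]
  have hwc2 : w.count 2 = p := by
    simp [hw, wblocks, List.count_append, List.count_replicate]
  have hwc3 : w.count 3 = p := by
    simp [hw, wblocks, List.count_append, List.count_replicate]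
  have k0 := key 0
  have k1 := key 1
  have k2 := key 2
  have k3 := key 3
  rw [hwc0] at k0; rw [hwc1] at k1; rw [hwc2] at k2; rw [hwc3] at k3
  simp [List.count_append, List.count_replicate] at k0 k1 k2 k3
  -- so p + c0 = m, p + c1 = m, p + c2 = nn, p + c3 = nn
  have hc01 : v.count 0 + y.count 0 = v.count 1 + y.count 1 := by omega
  have hc23 : v.count 2 + y.count 2 = v.count 3 + y.count 3 := by omega
  -- s is the window
  set s : List (Fin 4) := v ++ x ++ y with hs
  have hslen : s.length ≤ p := by simp [hs]; omega
  have hws : w = u ++ (s ++ zz) := by rw [hdec]; simp [hs, List.append_assoc]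
  have hidx : ∀ a : Fin 4, a ∈ s → ∃ i < s.length, w[u.length + i]? = some a :=
    fun a ha => idx_window hws ha
  -- a letter occurring in v ++ y
  obtain ⟨ℓ, hℓ⟩ := List.exists_mem_of_ne_nil _ hne
  have hmemvy : ∀ a : Fin 4, 0 < v.count a + y.count a → a ∈ s := by
    intro a ha
    have : 0 < v.count a ∨ 0 < y.count a := by omega
    rcases this with h | h
    · exact by simp [hs]; exact Or.inl (List.count_pos_iff.mp h)
    · exact by simp [hs]; exact Or.inr (Or.inr (List.count_pos_iff.mp h))
  have hℓc : 0 < v.count ℓ + y.count ℓ := by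
    rcases List.mem_append.mp hℓ with h | h
    · have := List.count_pos_iff.mpr h; omega
    · have := List.count_pos_iff.mpr h; omega
  have contra01 : ¬ (0 < v.count (0:Fin 4) + y.count 0) := by
    intro h0
    have h1 : 0 < v.count (1:Fin 4) + y.count 1 := by omega
    obtain ⟨i0, hi0, he0⟩ := hidx 0 (hmemvy 0 h0)
    obtain ⟨i1, hi1, he1⟩ := hidx 1 (hmemvy 1 h1)
    have w0 := (wget he0).1 rfl
    have w1 := ((wget he1).2.1 rfl).1
    omega
  have contra23 : ¬ (0 < v.count (2:Fin 4) + y.count 2) := by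
    intro h2
    have h3 : 0 < v.count (3:Fin 4) + y.count 3 := by omega
    obtain ⟨i2, hi2, he2⟩ := hidx 2 (hmemvy 2 h2)
    obtain ⟨i3, hi3, he3⟩ := hidx 3 (hmemvy 3 h3)
    have w2 := ((wget he2).2.2.1 rfl).2
    have w3 := (wget he3).2.2.2 rfl
    omega
  have hcases : ℓ = 0 ∨ ℓ = 1 ∨ ℓ = 2 ∨ ℓ = 3 := by fin_cases ℓ <;> decide
  rcases hcases with rfl | rfl | rfl | rfl
  · exact contra01 hℓc
  · exact contra01 (by omega)
  · exact contra23 hℓc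
  · exact contra23 (by omega)
end

section
/- If L₃ = {a^m b^{2m} : m ≥ 1} and L₄ = {a^{2n} b^n : n ≥ 1}, then the perfect shuffle L₃ ⧢ L₄ equals {a^{2n}(ba)^n b^{2n} : n ≥ 1}, and this language is not context-free. -/
/-- The perfect shuffle of two words: `pshuffle x y` alternates letters starting
with `x`, i.e. `x₁ y₁ x₂ y₂ ⋯`. -/
def pshuffle {α : Type*} : List α → List α → List α
  | [], ys => ys
  | a :: xs, ys => a :: pshuffle ys xs
termination_by x y => x.length + y.length
decreasing_by simp [Nat.lt_succ_iff]; omega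

/-- The perfect shuffle of two languages: the union of `x ⧢ y` over all pairs
of words of equal length, with `x` from the first and `y` from the second. -/
def langPshuffle {α : Type*} (L₁ L₂ : Language α) : Language α :=
  {z | ∃ x ∈ L₁, ∃ y ∈ L₂, x.length = y.length ∧ z = pshuffle x y}

section PerfectShuffle


lemma pshuffle_nil {α : Type*} (ys : List α) : pshuffle [] ys = ys := by rw [pshuffle]

lemma pshuffle_cons₂ {α : Type*} (a b : α) (xs ys : List α) :
    pshuffle (a :: xs) (b :: ys) = a :: b :: pshuffle xs ys := by
  rw [pshuffle, pshuffle]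

lemma pshuffle_append {α : Type*} (x₁ y₁ : List α) (h : x₁.length = y₁.length)
    (x₂ y₂ : List α) :
    pshuffle (x₁ ++ x₂) (y₁ ++ y₂) = pshuffle x₁ y₁ ++ pshuffle x₂ y₂ := by
  induction x₁ generalizing y₁ with
  | nil =>
    rw [List.length_nil] at h
    obtain rfl : y₁ = [] := by simpa using h.symm
    simp [pshuffle_nil]
  | cons a xs ih =>
    match y₁, h with
    | b :: ys, h =>
      simp only [List.cons_append, pshuffle_cons₂]
      rw [ih ys (by simpa using h)]

lemma pshuffle_replicate {α : Type*} (n : ℕ) (c d : α) :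
    pshuffle (List.replicate n c) (List.replicate n d) = (List.replicate n [c, d]).flatten := by
  induction n with
  | zero => simp [pshuffle_nil]
  | succ m ih => simp [List.replicate_succ, pshuffle_cons₂, ih]

lemma flatten_replicate_pair {α : Type*} (n : ℕ) (c : α) :
    (List.replicate n [c, c]).flatten = List.replicate (2 * n) c := by
  induction n with
  | zero => simp
  | succ m ih =>
    have : 2 * (m + 1) = 2 * m + 1 + 1 := by ring
    simp [List.replicate_succ, ih, this]

lemma pshuffle_eq : ∀ n : ℕ,
    pshuffle (List.replicate n (0 : Fin 2) ++ List.replicate (2 * n) 1)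
        (List.replicate (2 * n) (0 : Fin 2) ++ List.replicate n 1) =
      List.replicate (2 * n) (0 : Fin 2) ++ (List.replicate n [1, 0]).flatten ++
        List.replicate (2 * n) 1 := by
  intro n
  have h2 : ∀ (c : Fin 2), List.replicate (2 * n) c = List.replicate n c ++ List.replicate n c := by
    intro c; rw [two_mul, List.replicate_add]
  rw [h2 0, h2 1]
  rw [show List.replicate n (0:Fin 2) ++ (List.replicate n 1 ++ List.replicate n 1)
      = List.replicate n (0:Fin 2) ++ List.replicate n 1 ++ List.replicate n 1 by simp,
    show pshuffle (List.replicate n (0:Fin 2) ++ List.replicate n 1 ++ List.replicate n 1)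
        (List.replicate n 0 ++ List.replicate n 0 ++ List.replicate n 1)
      = pshuffle (List.replicate n (0:Fin 2) ++ List.replicate n 1)
          (List.replicate n 0 ++ List.replicate n 0)
        ++ pshuffle (List.replicate n 1) (List.replicate n 1) from
      pshuffle_append _ _ (by simp) _ _,
    pshuffle_append _ _ (by simp)]
  rw [pshuffle_replicate, pshuffle_replicate, pshuffle_replicate,
    flatten_replicate_pair, flatten_replicate_pair]
  simp [two_mul]

end PerfectShuffle

namespace CFPump
open ContextFreeGrammar

universe uT uN
variable {T : Type uT}

inductive PT (T : Type uT) (N : Type uN) : Type (max uT uN) where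
  | leaf : T → PT T N
  | node : N → List (PT T N) → PT T N

namespace PT
variable {N : Type uN}

def sym : PT T N → Symbol T N
  | leaf t => Symbol.terminal t
  | node A _ => Symbol.nonterminal A

@[simp] lemma sym_leaf (t : T) : (leaf t : PT T N).sym = Symbol.terminal t := rfl
@[simp] lemma sym_node (A : N) (ts) : (node A ts : PT T N).sym = Symbol.nonterminal A := rfl

def yield : PT T N → List T
  | leaf t => [t]
  | node _ ts => (ts.attach.map fun c => yield c.1).flatten
decreasing_by have := List.sizeOf_lt_of_mem c.2; simp; omega

def size : PT T N → ℕ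
  | leaf _ => 1
  | node _ ts => (ts.attach.map fun c => size c.1).sum + 1
decreasing_by have := List.sizeOf_lt_of_mem c.2; simp; omega

@[simp] lemma yield_leaf (t : T) : (leaf t : PT T N).yield = [t] := by rw [yield]

@[simp] lemma yield_node (A : N) (ts : List (PT T N)) :
    (node A ts).yield = (ts.map yield).flatten := by
  rw [yield]; congr 1; simp

@[simp] lemma size_node (A : N) (ts : List (PT T N)) :
    (node A ts).size = (ts.map size).sum + 1 := by
  rw [size]; congr 2; simp

lemma size_pos (t : PT T N) : 1 ≤ t.size := by
  cases t with
  | leaf t => rw [size]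
  | node A ts => rw [size_node]; omega

lemma size_lt_of_mem {c : PT T N} {A : N} {ts : List (PT T N)} (hc : c ∈ ts) :
    c.size < (node A ts).size := by
  rw [size_node]
  have : c.size ∈ ts.map size := List.mem_map_of_mem hc
  have := List.single_le_sum (fun x _ => Nat.zero_le x) _ this
  omega

end PT

open PT

variable {g : ContextFreeGrammar T}

/-- Well-formed parse trees. -/
inductive WF (g : ContextFreeGrammar T) : PT T g.NT → Prop where
  | leaf (t : T) : WF g (.leaf t)
  | node (A : g.NT) (ts : List (PT T g.NT)) (r : ContextFreeRule T g.NT)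
      (hr : r ∈ g.rules) (hin : r.input = A) (hout : r.output = ts.map sym)
      (hts : ∀ c ∈ ts, WF g c) : WF g (.node A ts)

lemma produces_of_node {A : g.NT} {ts : List (PT T g.NT)} (h : WF g (.node A ts)) :
    g.Produces [Symbol.nonterminal A] (ts.map sym) := by
  cases h with
  | node _ _ r hr hin hout =>
    exact ⟨r, hr, by rw [← hin, ← hout]; exact ContextFreeRule.Rewrites.input_output⟩

lemma list_derives (ts : List (PT T g.NT))
    (h : ∀ c ∈ ts, g.Derives [c.sym] (c.yield.map Symbol.terminal)) :
    g.Derives (ts.map sym) (((ts.map yield).flatten).map Symbol.terminal) := by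
  induction ts with
  | nil => simp; rfl
  | cons c cs ih =>
    have h1 : g.Derives ([c.sym] ++ cs.map sym)
        (c.yield.map Symbol.terminal ++ cs.map sym) :=
      (h c (by simp)).append_right _
    have h2 : g.Derives (c.yield.map Symbol.terminal ++ cs.map sym)
        (c.yield.map Symbol.terminal ++ ((cs.map yield).flatten).map Symbol.terminal) :=
      (ih fun d hd => h d (by simp [hd])).append_left _
    have := h1.trans h2
    simpa using this

lemma derives_yield : ∀ (n : ℕ) (t : PT T g.NT), t.size ≤ n → WF g t →
    g.Derives [t.sym] (t.yield.map Symbol.terminal) := by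
  intro n
  induction n with
  | zero => intro t ht; have := t.size_pos; omega
  | succ n ih =>
    intro t ht hwf
    cases t with
    | leaf t => simp; rfl
    | node A ts =>
      have h1 := produces_of_node hwf
      have h2 : g.Derives (ts.map sym) (((ts.map yield).flatten).map Symbol.terminal) := by
        refine list_derives ts fun c hc => ih c ?_ ?_
        · have := size_lt_of_mem (A := A) hc; omega
        · cases hwf with | node _ _ r hr hin hout hts => exact hts c hc
      simpa using h1.trans_derives h2

lemma derives_yield' (t : PT T g.NT) (hwf : WF g t) :
    g.Derives [t.sym] (t.yield.map Symbol.terminal) :=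
  derives_yield t.size t le_rfl hwf

/-- context of a child within a wf node -/
lemma ctx1 {A : g.NT} {ts : List (PT T g.NT)} (h : WF g (.node A ts))
    {c : PT T g.NT} (hc : c ∈ ts) :
    ∃ u z : List T, (PT.node A ts).yield = u ++ c.yield ++ z ∧
      g.Derives [Symbol.nonterminal A]
        (u.map Symbol.terminal ++ [c.sym] ++ z.map Symbol.terminal) := by
  obtain ⟨l, r', rfl⟩ := List.append_of_mem hc
  have hwfmem : ∀ d ∈ l ++ c :: r', WF g d := by
    cases h with | node _ _ r hr hin hout hts => exact hts
  refine ⟨(l.map yield).flatten, (r'.map yield).flatten, by simp, ?_⟩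
  have hp := produces_of_node h
  have hl : g.Derives (l.map sym) (((l.map yield).flatten).map Symbol.terminal) :=
    list_derives l fun d hd => derives_yield' d (hwfmem d (by simp [hd]))
  have hr : g.Derives (r'.map sym) (((r'.map yield).flatten).map Symbol.terminal) :=
    list_derives r' fun d hd => derives_yield' d (hwfmem d (by simp [hd]))
  have step1 : g.Derives ((l ++ c :: r').map sym)
      (((l.map yield).flatten).map Symbol.terminal ++ ([c.sym] ++ r'.map sym)) := by
    have := hl.append_right ([c.sym] ++ r'.map sym)
    simpa using this
  have step2 : g.Derives
      (((l.map yield).flatten).map Symbol.terminal ++ ([c.sym] ++ r'.map sym))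
      (((l.map yield).flatten).map Symbol.terminal ++
        ([c.sym] ++ ((r'.map yield).flatten).map Symbol.terminal)) :=
    (hr.append_left _).append_left _
  have := (hp.trans_derives step1).trans step2
  simpa [List.append_assoc] using this

/-- derivations to terminal words come from lists of wf parse trees -/
lemma trees_of_derives {α : List (Symbol T g.NT)} {w : List T}
    (h : g.Derives α (w.map Symbol.terminal)) :
    ∃ ts : List (PT T g.NT), (∀ t ∈ ts, WF g t) ∧ ts.map sym = α ∧
      (ts.map yield).flatten = w := by
  induction h using Relation.ReflTransGen.head_induction_on with
  | refl =>
    refine ⟨w.map PT.leaf, ?_, ?_, ?_⟩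
    · intro t ht; simp at ht; obtain ⟨a, _, rfl⟩ := ht; exact WF.leaf a
    · simp [List.map_map]
    · rw [List.map_map]
      rw [show (PT.yield ∘ PT.leaf : T → List T) = fun a => [a] by funext a; simp]
      induction w with
      | nil => rfl
      | cons a w ih => simpa using ih
  | head hprod hder ih =>
    obtain ⟨ts, hwf, hsym, hyld⟩ := ih
    obtain ⟨r, hr, hrw⟩ := hprod
    obtain ⟨p, q, hα, hβ⟩ := hrw.exists_parts
    rw [hβ] at hsym
    rw [show p ++ r.output ++ q = (p ++ r.output) ++ q by simp] at hsym
    obtain ⟨ts₁₂, ts₃, rfl, h12, h3⟩ := List.map_eq_append_iff.1 hsym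
    obtain ⟨ts₁, ts₂, rfl, h1, h2⟩ := List.map_eq_append_iff.1 h12
    refine ⟨ts₁ ++ PT.node r.input ts₂ :: ts₃, ?_, ?_, ?_⟩
    · intro t ht
      simp at ht
      rcases ht with ht | rfl | ht
      · exact hwf t (by simp [ht])
      · exact WF.node _ _ r hr rfl h2.symm fun c hc => hwf c (by simp [hc])
      · exact hwf t (by simp [ht])
    · simp [hα, h1, h3]
    · simp at hyld ⊢; simpa using hyld


/-! ### pumping chains -/

/-- `Good g A w Bs` : a nested chain of derivations from `A` yielding `w`,
with intermediate nonterminals `Bs`, each level strict. -/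
def Good (g : ContextFreeGrammar T) : g.NT → List T → List g.NT → Prop
  | A, w, [] => g.Derives [Symbol.nonterminal A] (w.map Symbol.terminal)
  | A, w, B :: Bs => ∃ u w' z : List T, w = u ++ w' ++ z ∧ 1 ≤ (u ++ z).length ∧
      g.Derives [Symbol.nonterminal A]
        (u.map Symbol.terminal ++ [Symbol.nonterminal B] ++ z.map Symbol.terminal) ∧
      Good g B w' Bs

lemma derives_subst {A B : g.NT} {u z : List T} {β : List (Symbol T g.NT)}
    (h1 : g.Derives [Symbol.nonterminal A]
      (u.map Symbol.terminal ++ [Symbol.nonterminal B] ++ z.map Symbol.terminal))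
    (h2 : g.Derives [Symbol.nonterminal B] β) :
    g.Derives [Symbol.nonterminal A]
      (u.map Symbol.terminal ++ β ++ z.map Symbol.terminal) :=
  h1.trans ((h2.append_left _).append_right _)

lemma good_headcomp {A B : g.NT} {w : List T} {Bs : List g.NT}
    (hAB : g.Derives [Symbol.nonterminal A] [Symbol.nonterminal B])
    (h : Good g B w Bs) : Good g A w Bs := by
  cases Bs with
  | nil => exact hAB.trans h
  | cons C Cs =>
    obtain ⟨u, w', z, rfl, hs, hD, hG⟩ := h
    exact ⟨u, w', z, rfl, hs, hAB.trans hD, hG⟩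

lemma good_derives : ∀ (Bs : List g.NT) (A : g.NT) (w : List T), Good g A w Bs →
    g.Derives [Symbol.nonterminal A] (w.map Symbol.terminal) := by
  intro Bs
  induction Bs with
  | nil => intro A w h; exact h
  | cons B Bs ih =>
    rintro A w ⟨u, w', z, rfl, hs, hD, hG⟩
    have := derives_subst hD (ih B w' hG)
    simpa using this

lemma good_split : ∀ (Bs₁ : List g.NT) (A : g.NT) (w : List T) (B : g.NT) (Bs₂ : List g.NT),
    Good g A w (Bs₁ ++ B :: Bs₂) →
    ∃ u w' z : List T, w = u ++ w' ++ z ∧ 1 ≤ (u ++ z).length ∧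
      g.Derives [Symbol.nonterminal A]
        (u.map Symbol.terminal ++ [Symbol.nonterminal B] ++ z.map Symbol.terminal) ∧
      Good g B w' Bs₂ := by
  intro Bs₁
  induction Bs₁ with
  | nil => intro A w B Bs₂ h; exact h
  | cons C Cs ih =>
    rintro A w B Bs₂ ⟨u₀, w₀, z₀, rfl, hs₀, hD₀, hG₀⟩
    obtain ⟨u₁, w', z₁, rfl, hs₁, hD₁, hG₁⟩ := ih C w₀ B Bs₂ hG₀
    refine ⟨u₀ ++ u₁, w', z₁ ++ z₀, by simp, by simp at hs₀ ⊢; omega, ?_, hG₁⟩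
    have := derives_subst hD₀ hD₁
    simpa [List.append_assoc] using this

/-- max nonterminal fanout -/
def M (g : ContextFreeGrammar T) : ℕ := (g.rules.sup fun r => r.output.length) + 1

lemma one_le_M : 1 ≤ M g := Nat.le_add_left 1 _

open Classical in
/-- the (finitely many) nonterminals that head rules -/
noncomputable def F (g : ContextFreeGrammar T) : Finset g.NT :=
  g.rules.image ContextFreeRule.input

lemma mem_F {B : g.NT} (h : ∃ r ∈ g.rules, r.input = B) : B ∈ F g := by
  classical
  obtain ⟨r, hr, hrB⟩ := h
  unfold F
  exact Finset.mem_image.2 ⟨r, hr, hrB⟩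

lemma list_exists_max {α : Type*} (l : List α) (f : α → ℕ) (h : l ≠ []) :
    ∃ c ∈ l, ∀ a ∈ l, f a ≤ f c := by
  induction l with
  | nil => exact absurd rfl h
  | cons x xs ih =>
    rcases eq_or_ne xs [] with rfl | hxs
    · exact ⟨x, by simp, by simp⟩
    · obtain ⟨c, hc, hmax⟩ := ih hxs
      rcases le_total (f x) (f c) with hle | hle
      · refine ⟨c, by simp [hc], fun a ha => ?_⟩
        rcases List.mem_cons.1 ha with rfl | ha
        exacts [hle, hmax a ha]
      · refine ⟨x, by simp, fun a ha => ?_⟩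
        rcases List.mem_cons.1 ha with rfl | ha
        exacts [le_rfl, (hmax a ha).trans hle]

lemma grand : ∀ (n : ℕ) (t : PT T g.NT), t.size ≤ n → WF g t → ∀ (d : ℕ) (A : g.NT),
    t.sym = Symbol.nonterminal A → M g ^ d < t.yield.length →
    ∃ Bs : List g.NT, Bs.length = d ∧ (∀ B ∈ Bs, B ∈ F g) ∧ Good g A t.yield Bs := by
  intro n
  induction n with
  | zero => intro t ht; have := t.size_pos; omega
  | succ n ih =>
    intro t ht hwf d A hsym hlen
    cases t with
    | leaf t => simp at hsym
    | node A' ts =>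
      obtain rfl : A' = A := by simpa using hsym
      cases d with
      | zero =>
        exact ⟨[], rfl, by simp, derives_yield' _ hwf⟩
      | succ d =>
        -- the tree is nonempty
        have hlen' : 1 ≤ (PT.node A' ts).yield.length := by
          have := Nat.one_le_pow (d + 1) (M g) (by have := one_le_M (g := g); omega)
          omega
        have hts_ne : ts ≠ [] := by
          rintro rfl; simp at hlen'
        -- pick the max child
        obtain ⟨c, hc, hmax⟩ := list_exists_max ts (fun s => s.yield.length) hts_ne
        have hwfc : WF g c := by
          cases hwf with | node _ _ r hr hin hout hts => exact hts c hc
        -- bound : yield length ≤ ts.length * yield c length ≤ M * yield c length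
        have hsum : (PT.node A' ts).yield.length ≤ ts.length * c.yield.length := by
          have h1 : (PT.node A' ts).yield.length = ((ts.map yield).map List.length).sum := by
            simp
          have h2 := List.sum_le_card_nsmul ((ts.map yield).map List.length) c.yield.length
            (by simp only [List.mem_map]
                rintro x ⟨y, ⟨s, hs, rfl⟩, rfl⟩
                exact hmax s hs)
          simp only [List.length_map, smul_eq_mul] at h2
          omega
        have hfan : ts.length ≤ M g := by
          cases hwf with
          | node _ _ r hr hin hout =>
            have : r.output.length ≤ g.rules.sup fun r => r.output.length :=
              Finset.le_sup (f := fun r => r.output.length) hr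
            have hl : r.output.length = ts.length := by rw [hout]; simp
            unfold M; omega
        have hYc : M g ^ d < c.yield.length := by
          have h1 : M g * M g ^ d < (PT.node A' ts).yield.length := by
            have : M g ^ (d + 1) = M g * M g ^ d := by ring
            omega
          have h2 : (PT.node A' ts).yield.length ≤ M g * c.yield.length :=
            hsum.trans (Nat.mul_le_mul_right _ hfan)
          exact Nat.lt_of_mul_lt_mul_left (h1.trans_le h2)
        -- c is a node
        have hc2 : 2 ≤ c.yield.length := by
          have : 1 ≤ M g ^ d := Nat.one_le_pow _ _ (by have := one_le_M (g := g); omega)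
          omega
        obtain ⟨B, cs, rfl⟩ : ∃ B cs, c = PT.node B cs := by
          cases c with
          | leaf t => simp at hc2
          | node B cs => exact ⟨B, cs, rfl⟩
        have hBF : B ∈ F g := by
          cases hwfc with | node _ _ r hr hin hout => exact mem_F ⟨r, hr, hin⟩
        have hsizec : (PT.node B cs).size ≤ n := by
          have := size_lt_of_mem (A := A') hc; omega
        obtain ⟨u, z, hdecomp, hDer⟩ := ctx1 hwf hc
        have hlens : (PT.node A' ts).yield.length =
            u.length + (PT.node B cs).yield.length + z.length := by
          rw [hdecomp]; simp; omega
        rcases Nat.eq_zero_or_pos (u.length + z.length) with hzero | hpos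
        · -- non-strict level: skip it
          obtain ⟨rfl, rfl⟩ : u = [] ∧ z = [] := by
            constructor <;> [skip; skip] <;>
              (apply List.eq_nil_of_length_eq_zero; omega)
          have hyeq : (PT.node A' ts).yield = (PT.node B cs).yield := by simpa using hdecomp
          obtain ⟨Bs, hBsl, hBsF, hGood⟩ := ih (PT.node B cs) hsizec hwfc (d + 1) B rfl
            (by rw [← hyeq]; exact hlen)
          refine ⟨Bs, hBsl, hBsF, ?_⟩
          rw [hyeq]
          exact good_headcomp (by simpa using hDer) hGood
        · -- strict level
          obtain ⟨Bs, hBsl, hBsF, hGood⟩ := ih (PT.node B cs) hsizec hwfc d B rfl hYc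
          refine ⟨B :: Bs, by simp [hBsl], ?_, ?_⟩
          · intro C hC
            rcases List.mem_cons.1 hC with rfl | hC
            exacts [hBF, hBsF _ hC]
          · exact ⟨u, (PT.node B cs).yield, z, hdecomp, by simp; omega,
              by simpa using hDer, hGood⟩

lemma tree_of_mem_language {w : List T} (h : w ∈ g.language) :
    ∃ t : PT T g.NT, WF g t ∧ t.sym = Symbol.nonterminal g.initial ∧ t.yield = w := by
  rw [mem_language_iff] at h
  obtain ⟨ts, hwf, hsym, hyld⟩ := trees_of_derives h
  have hl : ts.length = 1 := by
    have := congrArg List.length hsym; simpa using this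
  obtain ⟨t, rfl⟩ := List.length_eq_one_iff.1 hl
  refine ⟨t, hwf t (by simp), by simpa using hsym, by simpa using hyld⟩

lemma exists_dup_split {α : Type*} {l : List α} (h : ¬ l.Nodup) :
    ∃ (a : α) (l₁ l₂ l₃ : List α), l = l₁ ++ a :: (l₂ ++ a :: l₃) := by
  induction l with
  | nil => exact absurd List.nodup_nil h
  | cons x xs ih =>
    by_cases hx : x ∈ xs
    · obtain ⟨s, t, rfl⟩ := List.append_of_mem hx
      exact ⟨x, [], s, t, rfl⟩
    · have : ¬ xs.Nodup := fun h' => h (List.nodup_cons.2 ⟨hx, h'⟩)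
      obtain ⟨a, l₁, l₂, l₃, rfl⟩ := ih this
      exact ⟨a, x :: l₁, l₂, l₃, rfl⟩

lemma derives_pow {B : g.NT} {v y : List T}
    (hD : g.Derives [Symbol.nonterminal B]
      (v.map Symbol.terminal ++ [Symbol.nonterminal B] ++ y.map Symbol.terminal)) :
    ∀ i : ℕ, g.Derives [Symbol.nonterminal B]
      (((List.replicate i v).flatten).map Symbol.terminal ++ [Symbol.nonterminal B] ++
        ((List.replicate i y).flatten).map Symbol.terminal) := by
  intro i
  induction i with
  | zero => simp; rfl
  | succ i ih =>
    refine hD.trans ?_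
    have h2 := (ih.append_left (v.map Symbol.terminal)).append_right (y.map Symbol.terminal)
    have e1 : (List.replicate (i+1) v).flatten = v ++ (List.replicate i v).flatten := by
      simp [List.replicate_succ]
    have e2 : (List.replicate (i+1) y).flatten = (List.replicate i y).flatten ++ y := by
      rw [List.replicate_succ']; simp
    rw [e1, e2]
    simpa [List.append_assoc] using h2

/-- The weak pumping lemma for context-free grammars. -/
theorem weak_pumping (g : ContextFreeGrammar T) :
    ∃ k : ℕ, ∀ w ∈ g.language, k ≤ w.length →
    ∃ u v x y z : List T, w = u ++ v ++ x ++ y ++ z ∧ 1 ≤ v.length + y.length ∧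
    ∀ i : ℕ, u ++ (List.replicate i v).flatten ++ x ++ (List.replicate i y).flatten ++ z
      ∈ g.language := by
  classical
  refine ⟨M g ^ ((F g).card + 1) + 1, fun w hw hlen => ?_⟩
  obtain ⟨t, hwf, hsym, hyld⟩ := tree_of_mem_language hw
  obtain ⟨Bs, hBsl, hBsF, hGood⟩ := grand t.size t le_rfl hwf ((F g).card + 1) g.initial
    hsym (by rw [hyld]; omega)
  have hnd : ¬ Bs.Nodup := by
    intro hnd
    have h1 : Bs.toFinset.card = Bs.length := List.toFinset_card_of_nodup hnd
    have h2 : Bs.toFinset ⊆ F g := fun b hb => hBsF b (List.mem_toFinset.1 hb)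
    have := Finset.card_le_card h2
    omega
  obtain ⟨B, l₁, l₂, l₃, rfl⟩ := exists_dup_split hnd
  rw [hyld] at hGood
  obtain ⟨u, w', z, hw1, _, hD1, hG1⟩ := good_split l₁ g.initial w B (l₂ ++ B :: l₃) hGood
  obtain ⟨v, x, y, hw2, hs2, hD2, hG2⟩ := good_split l₂ B w' B l₃ hG1
  have hD3 : g.Derives [Symbol.nonterminal B] (x.map Symbol.terminal) :=
    good_derives l₃ B x hG2
  refine ⟨u, v, x, y, z, by rw [hw1, hw2]; simp, by simp at hs2; omega, fun i => ?_⟩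
  rw [mem_language_iff]
  have hp := derives_pow hD2 i
  have step1 := derives_subst hD1 hp
  have step1' : g.Derives [Symbol.nonterminal g.initial]
      ((u ++ (List.replicate i v).flatten).map Symbol.terminal ++ [Symbol.nonterminal B] ++
        ((List.replicate i y).flatten ++ z).map Symbol.terminal) := by
    simpa [List.append_assoc] using step1
  have step2 := derives_subst step1' hD3
  simpa [List.append_assoc] using step2

end CFPump

namespace CFApp

/-- the word `a^{2n} (ba)^n b^{2n}` -/
def Wd (n : ℕ) : List (Fin 2) :=
  List.replicate (2 * n) 0 ++ (List.replicate n [1, 0]).flatten ++ List.replicate (2 * n) 1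

def p0 : Fin 2 → Bool := fun e => e == 0
def p1 : Fin 2 → Bool := fun e => e == 1

lemma flat_len (i : ℕ) (l : List (Fin 2)) : ((List.replicate i l).flatten).length = i * l.length := by
  induction i with
  | zero => simp
  | succ i ih => simp [List.replicate_succ, ih]; ring

lemma Wd_len (n : ℕ) : (Wd n).length = 6 * n := by
  simp [Wd, flat_len]; omega

lemma count0_flat (n : ℕ) :
    List.count (0 : Fin 2) ((List.replicate n [1, 0]).flatten) = n := by
  induction n with
  | zero => simp
  | succ n ih => simp [List.replicate_succ, ih, List.count_cons]

lemma flat_cons (n : ℕ) (hn : 1 ≤ n) :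
    (List.replicate n ([1, 0] : List (Fin 2))).flatten =
      1 :: 0 :: (List.replicate (n - 1) [1, 0]).flatten := by
  obtain ⟨m, rfl⟩ : ∃ m, n = m + 1 := ⟨n - 1, by omega⟩
  simp [List.replicate_succ]

lemma rev_flat (n : ℕ) :
    ((List.replicate n ([1, 0] : List (Fin 2))).flatten).reverse =
      (List.replicate n [0, 1]).flatten := by
  induction n with
  | zero => simp
  | succ n ih =>
    rw [List.replicate_succ, List.flatten_cons, List.reverse_append, ih,
      List.replicate_succ', List.flatten_append]
    simp

lemma flat0_cons (n : ℕ) (hn : 1 ≤ n) :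
    (List.replicate n ([0, 1] : List (Fin 2))).flatten =
      0 :: 1 :: (List.replicate (n - 1) [0, 1]).flatten := by
  obtain ⟨m, rfl⟩ : ∃ m, n = m + 1 := ⟨n - 1, by omega⟩
  simp [List.replicate_succ]

lemma takeWhile_rep_append {α : Type*} (p : α → Bool) (a b : α) (hpa : p a = true)
    (hpb : p b = false) (k : ℕ) (t : List α) :
    List.takeWhile p (List.replicate k a ++ b :: t) = List.replicate k a := by
  induction k with
  | zero => simp [List.takeWhile_cons, hpb]
  | succ k ih => simp [List.replicate_succ, List.takeWhile_cons, hpa, hpb, ih]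

lemma dropWhile_rep_append {α : Type*} (p : α → Bool) (a b : α) (hpa : p a = true)
    (hpb : p b = false) (k : ℕ) (t : List α) :
    List.dropWhile p (List.replicate k a ++ b :: t) = b :: t := by
  induction k with
  | zero => simp [List.dropWhile_cons, hpb]
  | succ k ih => simp [List.replicate_succ, List.dropWhile_cons, hpa, hpb, ih]

lemma dropWhile_append_all {α : Type*} (p : α → Bool) (l l' : List α)
    (h : ∀ a ∈ l, p a = true) :
    List.dropWhile p (l ++ l') = List.dropWhile p l' := by
  induction l with
  | nil => simp
  | cons a t ih =>
    simp only [List.cons_append, List.dropWhile_cons, h a (by simp)]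
    exact ih fun a ha => h a (by simp [ha])

lemma takeWhile_append_stop {α : Type*} (p : α → Bool) (l l' : List α)
    (h : ∃ e ∈ l, p e = false) :
    List.takeWhile p (l ++ l') = List.takeWhile p l := by
  rw [List.takeWhile_append, if_neg]
  intro hlen
  obtain ⟨e, he, hpe⟩ := h
  have heq : List.takeWhile p l = l := (List.takeWhile_sublist p).eq_of_length hlen
  have := List.mem_takeWhile_imp (heq ▸ he)
  rw [this] at hpe; simp at hpe

lemma rWd (n : ℕ) (hn : 1 ≤ n) : ((Wd n).takeWhile p0).length = 2 * n := by
  have : Wd n = List.replicate (2 * n) (0 : Fin 2) ++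
      (1 : Fin 2) :: (0 :: ((List.replicate (n - 1) [1, 0]).flatten ++ List.replicate (2 * n) 1)) := by
    rw [Wd, flat_cons n hn]; simp
  rw [this, takeWhile_rep_append p0 0 1 rfl rfl]
  simp

lemma sWd (n : ℕ) (hn : 1 ≤ n) : (((Wd n).reverse).takeWhile p1).length = 2 * n := by
  have : (Wd n).reverse = List.replicate (2 * n) (1 : Fin 2) ++
      (0 : Fin 2) :: (1 :: ((List.replicate (n - 1) [0, 1]).flatten ++ List.replicate (2 * n) 0)) := by
    rw [Wd]
    simp only [List.reverse_append, List.reverse_replicate, rev_flat]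
    rw [flat0_cons n hn]; simp
  rw [this, takeWhile_rep_append p1 1 0 rfl rfl]
  simp

lemma gWd (n : ℕ) (hn : 1 ≤ n) :
    List.count (0 : Fin 2) ((Wd n).dropWhile p0) = n := by
  have h1 : Wd n = List.replicate (2 * n) (0 : Fin 2) ++
      (1 : Fin 2) :: (0 :: ((List.replicate (n - 1) [1, 0]).flatten ++ List.replicate (2 * n) 1)) := by
    rw [Wd, flat_cons n hn]; simp
  rw [h1, dropWhile_rep_append p0 0 1 rfl rfl]
  have h2 : ((1 : Fin 2) :: (0 : Fin 2) ::
      ((List.replicate (n - 1) [1, 0]).flatten ++ List.replicate (2 * n) 1)) =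
      (List.replicate n ([1, 0] : List (Fin 2))).flatten ++ List.replicate (2 * n) 1 := by
    rw [flat_cons n hn]; simp
  rw [h2]
  simp [count0_flat, List.count_replicate]


lemma fin2_eq_one {e : Fin 2} (h : e ≠ 0) : e = 1 := by omega

theorem L_not_CF :
    ¬ Language.IsContextFree
      {w : List (Fin 2) | ∃ n : ℕ, 1 ≤ n ∧
        w = List.replicate (2 * n) 0 ++ (List.replicate n [1, 0]).flatten ++
            List.replicate (2 * n) 1} := by
  rintro ⟨g, hg⟩
  obtain ⟨k, hpump⟩ := CFPump.weak_pumping g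
  have hwmem : Wd (k + 1) ∈ g.language := by
    rw [hg]; exact ⟨k + 1, by omega, rfl⟩
  obtain ⟨u, v, x, y, z, hsplit, hvy, hiter⟩ :=
    hpump _ hwmem (by rw [Wd_len]; omega)
  have hmem : ∀ i : ℕ, ∃ m, 1 ≤ m ∧
      u ++ (List.replicate i v).flatten ++ x ++ (List.replicate i y).flatten ++ z = Wd m := by
    intro i
    have := hiter i
    rw [hg] at this
    obtain ⟨m, hm, hWm⟩ := this
    exact ⟨m, hm, hWm⟩
  have flat1 : ∀ l : List (Fin 2), (List.replicate 1 l).flatten = l := by simp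
  have flat2 : ∀ l : List (Fin 2), (List.replicate 2 l).flatten = l ++ l := by
    intro l; have h2 : List.replicate 2 l = [l, l] := rfl
    rw [h2]; simp
  obtain ⟨m₁, hm₁, hP₁⟩ := hmem 1
  obtain ⟨m₂, hm₂, hP₂⟩ := hmem 2
  -- length equations
  have hl₁ : u.length + v.length + x.length + y.length + z.length = 6 * m₁ := by
    have := congrArg List.length hP₁
    simp [flat1, Wd_len] at this
    omega
  have hl₂ : u.length + 2 * v.length + x.length + 2 * y.length + z.length = 6 * m₂ := by
    have := congrArg List.length hP₂
    simp [flat2, Wd_len] at this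
    omega
  by_cases hA : ∀ e ∈ u ++ v, e = (0 : Fin 2)
  · by_cases hB : ∀ e ∈ y ++ z, e = (1 : Fin 2)
    · -- both ends uniform : use the count of 0s after the leading 0s
      set c := List.count (0 : Fin 2) x with hc
      obtain ⟨m, hm, hP⟩ := hmem (6 * c + 6)
      -- upper bound on m
      have hall : ∀ e ∈ u ++ (List.replicate (6 * c + 6) v).flatten, p0 e = true := by
        intro e he
        rcases List.mem_append.1 he with he | he
        · have := hA e (List.mem_append.2 (Or.inl he)); simp [p0, this]
        · simp only [List.mem_flatten, List.mem_replicate] at he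
          obtain ⟨l, ⟨-, rfl⟩, hel⟩ := he
          have := hA e (List.mem_append.2 (Or.inr hel)); simp [p0, this]
      have hdrop : (Wd m).dropWhile p0 =
          List.dropWhile p0 (x ++ (List.replicate (6 * c + 6) y).flatten ++ z) := by
        rw [← hP, show u ++ (List.replicate (6*c+6) v).flatten ++ x ++
            (List.replicate (6*c+6) y).flatten ++ z =
          (u ++ (List.replicate (6*c+6) v).flatten) ++
            (x ++ (List.replicate (6*c+6) y).flatten ++ z) by simp]
        exact dropWhile_append_all p0 _ _ hall
      have hcount : List.count (0 : Fin 2) ((Wd m).dropWhile p0) ≤ c := by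
        rw [hdrop]
        have hsub := (List.dropWhile_sublist (l := x ++ (List.replicate (6*c+6) y).flatten ++ z)
          p0).count_le (0 : Fin 2)
        have hy0 : List.count (0 : Fin 2) ((List.replicate (6*c+6) y).flatten) = 0 := by
          rw [List.count_eq_zero]
          intro h0
          simp only [List.mem_flatten, List.mem_replicate] at h0
          obtain ⟨l, ⟨-, rfl⟩, hel⟩ := h0
          have := hB 0 (List.mem_append.2 (Or.inl hel)); simp at this
        have hz0 : List.count (0 : Fin 2) z = 0 := by
          rw [List.count_eq_zero]
          intro h0
          have := hB 0 (List.mem_append.2 (Or.inr h0)); simp at this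
        simp only [List.count_append, hy0, hz0] at hsub
        omega
      rw [gWd m hm] at hcount
      -- lower bound on m
      have hlb : u.length + (6*c+6) * v.length + x.length + (6*c+6) * y.length + z.length
          = 6 * m := by
        have := congrArg List.length hP
        simp [flat_len, Wd_len] at this
        omega
      have hmul : 6*c+6 ≤ (6*c+6) * v.length + (6*c+6) * y.length := by
        have h1 : (6*c+6) * 1 ≤ (6*c+6) * (v.length + y.length) :=
          Nat.mul_le_mul_left _ hvy
        rw [Nat.mul_add] at h1
        omega
      omega
    · -- some non-1 in y ++ z : tail run of 1s is invariant
      push_neg at hB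
      obtain ⟨e, he, hne⟩ := hB
      have hstop : ∃ e ∈ (y ++ z).reverse, p1 e = false := by
        refine ⟨e, List.mem_reverse.2 he, ?_⟩
        simp [p1]; exact hne
      have hQ₁ : (y ++ z).reverse ++ (u ++ v ++ x).reverse = (Wd m₁).reverse := by
        rw [← List.reverse_append, ← hP₁, flat1, flat1]
        simp
      have hQ₂ : (y ++ z).reverse ++ (u ++ v ++ v ++ x ++ y).reverse = (Wd m₂).reverse := by
        rw [← List.reverse_append, ← hP₂, flat2, flat2]
        simp
      have t1 : ((Wd m₁).reverse.takeWhile p1).length = (((y++z).reverse).takeWhile p1).length := by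
        rw [← hQ₁, takeWhile_append_stop p1 _ _ hstop]
      have t2 : ((Wd m₂).reverse.takeWhile p1).length = (((y++z).reverse).takeWhile p1).length := by
        rw [← hQ₂, takeWhile_append_stop p1 _ _ hstop]
      rw [sWd m₁ hm₁] at t1
      rw [sWd m₂ hm₂] at t2
      omega
  · -- some non-0 in u ++ v : head run of 0s is invariant
    push_neg at hA
    obtain ⟨e, he, hne⟩ := hA
    have hstop : ∃ e ∈ u ++ v, p0 e = false := ⟨e, he, by simp [p0]; exact hne⟩
    have hQ₁ : (u ++ v) ++ (x ++ y ++ z) = Wd m₁ := by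
      rw [← hP₁, flat1, flat1]; simp
    have hQ₂ : (u ++ v) ++ (v ++ x ++ y ++ y ++ z) = Wd m₂ := by
      rw [← hP₂, flat2, flat2]; simp
    have t1 : ((Wd m₁).takeWhile p0).length = ((u ++ v).takeWhile p0).length := by
      rw [← hQ₁, takeWhile_append_stop p0 _ _ hstop]
    have t2 : ((Wd m₂).takeWhile p0).length = ((u ++ v).takeWhile p0).length := by
      rw [← hQ₂, takeWhile_append_stop p0 _ _ hstop]
    rw [rWd m₁ hm₁] at t1
    rw [rWd m₂ hm₂] at t2
    omega

end CFApp


/-- With alphabet `Fin 2` (`a = 0`, `b = 1`): the perfect shuffle of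
`L₃ = {aᵐ b²ᵐ : m ≥ 1}` and `L₄ = {a²ⁿ bⁿ : n ≥ 1}` equals
`{a²ⁿ (ba)ⁿ b²ⁿ : n ≥ 1}`, which is not context-free. -/
theorem pshuffle_L3_L4 :
    langPshuffle
        {w : List (Fin 2) | ∃ m : ℕ, 1 ≤ m ∧
          w = List.replicate m 0 ++ List.replicate (2 * m) 1}
        {w : List (Fin 2) | ∃ n : ℕ, 1 ≤ n ∧
          w = List.replicate (2 * n) 0 ++ List.replicate n 1} =
      {w : List (Fin 2) | ∃ n : ℕ, 1 ≤ n ∧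
        w = List.replicate (2 * n) 0 ++ (List.replicate n [1, 0]).flatten ++
            List.replicate (2 * n) 1} ∧
    ¬ Language.IsContextFree
      {w : List (Fin 2) | ∃ n : ℕ, 1 ≤ n ∧
        w = List.replicate (2 * n) 0 ++ (List.replicate n [1, 0]).flatten ++
            List.replicate (2 * n) 1} := by
  constructor
  · ext w
    simp only [langPshuffle, Set.mem_setOf_eq]
    constructor
    · rintro ⟨x, ⟨m, hm, rfl⟩, y, ⟨n, hn, rfl⟩, hlen, rfl⟩
      have hmn : m = n := by simp at hlen; omega
      subst hmn
      exact ⟨m, hm, (pshuffle_eq m)⟩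
    · rintro ⟨n, hn, rfl⟩
      exact ⟨_, ⟨n, hn, rfl⟩, _, ⟨n, hn, rfl⟩, by simp; omega, (pshuffle_eq n).symm⟩
  · exact CFApp.L_not_CF
end

section
/- The language L' = {01^a 0^{b+1} 1^{c+1} 0^d 1 : a,b,c,d ≥ 1 and ∃y with 01^a 0^{b+1} 1^{c+1} 0^d 1 ∈ y ∐ y} equals {01^n 0^m (01) 1^n 0^m 1 : m,n ≥ 1}. -/
lemma IsShuffle.nil_left {α : Type*} : ∀ l : List α, IsShuffle [] l l
  | [] => .nil
  | a :: l => .right a (nil_left l)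

lemma IsShuffle.comm {α : Type*} {x y z : List α} (h : IsShuffle x y z) : IsShuffle y x z := by
  induction h with
  | nil => exact .nil
  | left a _ ih => exact .right a ih
  | right a _ ih => exact .left a ih

lemma IsShuffle.appendLeft {α : Type*} {x y z : List α} (l : List α) (h : IsShuffle x y z) :
    IsShuffle (l ++ x) y (l ++ z) := by
  induction l with
  | nil => exact h
  | cons a l ih => exact .left a ih

lemma IsShuffle.nil_inv {α : Type*} {x y : List α} (h : IsShuffle x y []) : x = [] ∧ y = [] := by
  cases h; exact ⟨rfl, rfl⟩

lemma IsShuffle.cons_inv {α : Type*} {x y z : List α} {a : α} (h : IsShuffle x y (a :: z)) :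
    (∃ x', x = a :: x' ∧ IsShuffle x' y z) ∨ (∃ y', y = a :: y' ∧ IsShuffle x y' z) := by
  cases h with
  | left _ h => exact .inl ⟨_, rfl, h⟩
  | right _ h => exact .inr ⟨_, rfl, h⟩

lemma IsShuffle.single_inv {α : Type*} {x y : List α} {a : α} (h : IsShuffle x y [a]) :
    (x = [a] ∧ y = []) ∨ (x = [] ∧ y = [a]) := by
  rcases h.cons_inv with ⟨x', rfl, h1⟩ | ⟨y', rfl, h1⟩
  · obtain ⟨rfl, rfl⟩ := h1.nil_inv; exact .inl ⟨rfl, rfl⟩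
  · obtain ⟨rfl, rfl⟩ := h1.nil_inv; exact .inr ⟨rfl, rfl⟩

lemma IsShuffle.rep_split {α : Type*} : ∀ {k : ℕ} {x y z : List α} {a : α},
    IsShuffle x y (List.replicate k a ++ z) →
    ∃ i j x' y', i + j = k ∧ x = List.replicate i a ++ x' ∧ y = List.replicate j a ++ y' ∧
      IsShuffle x' y' z := by
  intro k
  induction k with
  | zero => intro x y z a h; exact ⟨0, 0, x, y, rfl, rfl, rfl, h⟩
  | succ k ih =>
    intro x y z a h
    rw [List.replicate_succ, List.cons_append] at h
    rcases h.cons_inv with ⟨x1, rfl, h1⟩ | ⟨y1, rfl, h1⟩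
    · obtain ⟨i, j, x', y', hij, hx, hy, h'⟩ := ih h1
      exact ⟨i + 1, j, x', y', by omega, by simp [List.replicate_succ, hx], hy, h'⟩
    · obtain ⟨i, j, x', y', hij, hx, hy, h'⟩ := ih h1
      exact ⟨i, j + 1, x', y', by omega, hx, by simp [List.replicate_succ, hy], h'⟩

lemma rep_eq {α : Type*} {a b : α} (hab : a ≠ b) : ∀ {m n : ℕ} {l l' : List α},
    List.replicate n a ++ (b :: l) = List.replicate m a ++ l' →
    m ≤ n ∧ l' = List.replicate (n - m) a ++ (b :: l) := by
  intro m
  induction m with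
  | zero => intro n l l' h; exact ⟨Nat.zero_le _, by simpa using h.symm⟩
  | succ m ih =>
    intro n l l' h
    cases n with
    | zero =>
      rw [List.replicate_succ] at h
      simp at h
      exact absurd h.1.symm hab
    | succ n =>
      rw [List.replicate_succ, List.replicate_succ, List.cons_append, List.cons_append] at h
      obtain ⟨h1, h2⟩ := ih (List.cons.inj h).2
      exact ⟨Nat.succ_le_succ h1, by rwa [Nat.succ_sub_succ]⟩

lemma cons_replicate_swap {α : Type*} (a : α) (n : ℕ) (X : List α) :
    a :: (List.replicate n a ++ X) = List.replicate n a ++ (a :: X) := by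
  rw [← List.cons_append, ← List.replicate_succ, List.replicate_succ', List.append_assoc,
    List.singleton_append]

lemma form_eq (n m : ℕ) :
    ([0] ++ List.replicate n 1 ++ List.replicate (m + 1) 0 ++ List.replicate (n + 1) 1 ++
      List.replicate m 0 ++ [1] : List (Fin 2)) =
    [0] ++ List.replicate n 1 ++ List.replicate m 0 ++ [0, 1] ++ List.replicate n 1 ++
      List.replicate m 0 ++ [1] := by
  rw [show List.replicate (m + 1) (0 : Fin 2) = List.replicate m 0 ++ [0] from
    List.replicate_succ' .., show List.replicate (n + 1) (1 : Fin 2) = 1 :: List.replicate n 1 from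
    rfl]
  simp [List.append_assoc]

/-- Main combinatorial lemma: if `t` shuffled with `0 :: t` gives
`1^(A+1) 0^(B+2) 1^(c+1) 0^d 1`, then `c = A+1` and `d = B+1`. -/
lemma key {A B c d : ℕ} {t : List (Fin 2)}
    (h1 : IsShuffle t ((0 : Fin 2) :: t)
      (List.replicate (A + 1) 1 ++ (List.replicate (B + 1 + 1) 0 ++
        (List.replicate (c + 1) 1 ++ (List.replicate d 0 ++ [1]))))) :
    c = A + 1 ∧ d = B + 1 := by
  have h10 : (1 : Fin 2) ≠ 0 := by decide
  have h01 : (0 : Fin 2) ≠ 1 := by decide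
  -- block 1^(A+1): all from the first copy
  obtain ⟨i, j, x', y', hij, hx, hy', h2⟩ := h1.rep_split
  have e1 : List.replicate 0 (1 : Fin 2) ++ ((0 : Fin 2) :: t) = List.replicate j 1 ++ y' := by
    simpa using hy'
  obtain ⟨hj, hy'e⟩ := rep_eq h10 e1
  have hj0 : j = 0 := by omega
  subst hj0
  simp only [Nat.sub_zero, List.replicate, List.nil_append] at hy'e
  subst hy'e
  have hi : i = A + 1 := by omega
  subst hi
  subst hx
  -- block 0^(B+2)
  obtain ⟨i2, j2, x₂, y₂, hij2, hx2, hy2, h3⟩ := h2.rep_split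
  have e2 : List.replicate 1 (0 : Fin 2) ++ ((1 : Fin 2) :: (List.replicate A 1 ++ x')) =
      List.replicate j2 0 ++ y₂ := by
    simpa [List.replicate_succ] using hy2
  obtain ⟨hj2, hy2e⟩ := rep_eq h01 e2
  interval_cases j2
  · -- second copy contributes no zero: contradiction
    simp only [Nat.sub_zero] at hy2e
    obtain ⟨i3, j3, x₃, y₃, hij3, hx3, hy3, h4⟩ := h3.rep_split
    have e3 : List.replicate 0 (1 : Fin 2) ++
        ((0 : Fin 2) :: ((1 : Fin 2) :: (List.replicate A 1 ++ x'))) =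
        List.replicate j3 1 ++ y₃ := by
      rw [← hy3, hy2e]; simp [List.replicate_succ]
    obtain ⟨hj3, hy3e⟩ := rep_eq h10 e3
    have hj30 : j3 = 0 := by omega
    subst hj30
    simp only [Nat.sub_zero, List.replicate, List.nil_append] at hy3e
    obtain ⟨i4, j4, x₄, y₄, hij4, hx4, hy4, h5⟩ := h4.rep_split
    have e4 : List.replicate 1 (0 : Fin 2) ++ ((1 : Fin 2) :: (List.replicate A 1 ++ x')) =
        List.replicate j4 0 ++ y₄ := by
      rw [← hy4, hy3e]; simp [List.replicate_succ]
    obtain ⟨hj4, hy4e⟩ := rep_eq h01 e4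
    rcases h5.single_inv with ⟨hx5, hy5⟩ | ⟨hx5, hy5⟩ <;>
      · rw [hy5, hx2] at hy4e
        have hlen := congrArg List.length hy4e
        simp at hlen <;> omega
  · -- second copy contributes exactly its leading zero
    simp only [Nat.sub_self, List.replicate, List.nil_append] at hy2e
    have hi2 : i2 = B + 1 := by omega
    subst hi2
    -- block 1^(c+1)
    obtain ⟨i3, j3, x₃, y₃, hij3, hx3, hy3, h4⟩ := h3.rep_split
    have e3 : List.replicate (A + 1) (1 : Fin 2) ++ ((0 : Fin 2) :: (List.replicate B 0 ++ x₂)) =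
        List.replicate j3 1 ++ y₃ := by
      rw [← hy3, hy2e, hx2]
      simp [List.replicate_succ, List.append_assoc]
    obtain ⟨hj3, hy3e⟩ := rep_eq h10 e3
    -- block 0^d
    obtain ⟨i4, j4, x₄, y₄, hij4, hx4, hy4, h5⟩ := h4.rep_split
    rcases Nat.lt_or_ge j3 (A + 1) with hlt | hge
    · -- the second copy has 1s left: contradiction
      obtain ⟨E, hE⟩ : ∃ E, A + 1 - j3 = E + 1 := ⟨A - j3, by omega⟩
      rw [hE] at hy3e
      have e4 : List.replicate 0 (0 : Fin 2) ++
          ((1 : Fin 2) :: (List.replicate E 1 ++ ((0 : Fin 2) :: (List.replicate B 0 ++ x₂)))) =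
          List.replicate j4 0 ++ y₄ := by
        rw [← hy4, hy3e]; simp [List.replicate_succ]
      obtain ⟨hj4, hy4e⟩ := rep_eq h01 e4
      rcases h5.single_inv with ⟨hx5, hy5⟩ | ⟨hx5, hy5⟩ <;>
        · rw [hy5] at hy4e
          have hlen := congrArg List.length hy4e
          simp at hlen
    · have hj3e : j3 = A + 1 := le_antisymm hj3 hge
      subst hj3e
      simp only [Nat.sub_self, List.replicate, List.nil_append] at hy3e
      rcases h5.single_inv with ⟨hx5, hy5⟩ | ⟨hx5, hy5⟩
      · -- final 1 from the first copy while second copy unfinished: contradiction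
        rw [hy3e, hy5, hx3, hx4, hx5] at hy4
        have h1mem : (1 : Fin 2) ∈ List.replicate j4 (0 : Fin 2) ++ ([] : List (Fin 2)) := by
          rw [← hy4]; simp
        simp [List.mem_replicate] at h1mem
      · rw [hy3e, hy5, hx3, hx4, hx5] at hy4
        cases i3 with
        | zero =>
          have h1mem : (1 : Fin 2) ∈ (0 : Fin 2) :: (List.replicate B 0 ++
              (List.replicate 0 1 ++ (List.replicate i4 0 ++ ([] : List (Fin 2))))) := by
            rw [hy4]; simp
          simp [List.mem_replicate] at h1mem
        | succ E =>
          have Ec' : List.replicate (B + 1) (0 : Fin 2) ++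
              ((1 : Fin 2) :: (List.replicate E 1 ++ (List.replicate i4 0 ++ []))) =
              List.replicate j4 0 ++ [1] := by
            rw [← hy4]
            simp [List.replicate_succ, List.append_assoc]
          obtain ⟨hj4, h14⟩ := rep_eq h01 Ec'
          have hlen := congrArg List.length h14
          simp at hlen
          constructor <;> omega

/-- The language L' of words of the form 0 1^a 0^(b+1) 1^(c+1) 0^d 1 (a,b,c,d ≥ 1)
that lie in the self-shuffle y ∐ y of some word y equals
{0 1^n 0^m (01) 1^n 0^m 1 : m, n ≥ 1}.  Alphabet: Fin 2. -/
theorem selfShuffle_intersection_char :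
    {w : List (Fin 2) | (∃ a b c d : ℕ, 1 ≤ a ∧ 1 ≤ b ∧ 1 ≤ c ∧ 1 ≤ d ∧
        w = [0] ++ List.replicate a 1 ++ List.replicate (b + 1) 0 ++
            List.replicate (c + 1) 1 ++ List.replicate d 0 ++ [1]) ∧
      ∃ y : List (Fin 2), IsShuffle y y w} =
    {w : List (Fin 2) | ∃ m n : ℕ, 1 ≤ m ∧ 1 ≤ n ∧
        w = [0] ++ List.replicate n 1 ++ List.replicate m 0 ++ [0, 1] ++
            List.replicate n 1 ++ List.replicate m 0 ++ [1]} := by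
  ext w
  simp only [Set.mem_setOf_eq]
  constructor
  · rintro ⟨⟨a, b, c, d, ha, hb, hc, hd, rfl⟩, y, hy⟩
    obtain ⟨A, rfl⟩ : ∃ A, a = A + 1 := ⟨a - 1, by omega⟩
    obtain ⟨B, rfl⟩ : ∃ B, b = B + 1 := ⟨b - 1, by omega⟩
    simp only [List.append_assoc, List.singleton_append] at hy
    have hcd : c = A + 1 ∧ d = B + 1 := by
      rcases hy.cons_inv with ⟨t, rfl, h⟩ | ⟨t, rfl, h⟩
      · exact key h
      · exact key h.comm
    obtain ⟨rfl, rfl⟩ := hcd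
    exact ⟨B + 1, A + 1, by omega, by omega, form_eq (A + 1) (B + 1)⟩
  · rintro ⟨m, n, hm, hn, rfl⟩
    constructor
    · exact ⟨n, m, n, m, hn, hm, hn, hm, (form_eq n m).symm⟩
    · refine ⟨(0 :: (List.replicate n 1 ++ List.replicate m 0)) ++ [1], ?_⟩
      have base : IsShuffle [(1 : Fin 2)]
          ((0 : Fin 2) :: (List.replicate n 1 ++ (List.replicate m 0 ++ [1])))
          (0 :: 1 :: (List.replicate n 1 ++ (List.replicate m 0 ++ [1]))) :=
        .right 0 (.left 1 (IsShuffle.nil_left _))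
      have main := base.appendLeft ((0 : Fin 2) :: (List.replicate n 1 ++ List.replicate m 0))
      have e1 : (0 : Fin 2) :: (List.replicate n 1 ++ (List.replicate m 0 ++ [1])) =
          (0 :: (List.replicate n 1 ++ List.replicate m 0)) ++ [1] := by
        simp [List.append_assoc]
      have e2 : ((0 : Fin 2) :: (List.replicate n 1 ++ List.replicate m 0)) ++
          (0 :: 1 :: (List.replicate n 1 ++ (List.replicate m 0 ++ [1]))) =
          [0] ++ List.replicate n 1 ++ List.replicate m 0 ++ [0, 1] ++
            List.replicate n 1 ++ List.replicate m 0 ++ [1] := by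
        simp [List.append_assoc]
      rw [e1, e2] at main
      exact main
end

section
/- If there exists a word x such that y ∈ x ∐ x^R, then y is an abelian square, i.e., y = uv with |u| = |v| and v a permutation (anagram) of u. -/
theorem IsShuffle.perm {α : Type*} {x y z : List α} (h : IsShuffle x y z) :
    z.Perm (x ++ y) := by
  induction h with
  | nil => simp
  | left a _ ih => simpa using ih.cons a
  | right a h ih =>
    refine (ih.cons a).trans ?_
    exact (List.perm_middle).symm

theorem IsShuffle.split {α : Type*} {x y z : List α} (h : IsShuffle x y z) :
    ∀ z1 z2 : List α, z = z1 ++ z2 →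
      ∃ x1 x2 y1 y2 : List α, x = x1 ++ x2 ∧ y = y1 ++ y2 ∧
        IsShuffle x1 y1 z1 ∧ IsShuffle x2 y2 z2 := by
  induction h with
  | nil =>
    intro z1 z2 hz
    rcases List.append_eq_nil_iff.mp hz.symm with ⟨rfl, rfl⟩
    exact ⟨[], [], [], [], rfl, rfl, .nil, .nil⟩
  | left a h ih =>
    intro z1 z2 hz
    cases z1 with
    | nil =>
      simp only [List.nil_append] at hz
      subst hz
      exact ⟨[], _, [], _, rfl, rfl, .nil, .left a h⟩
    | cons b z1 =>
      simp only [List.cons_append, List.cons.injEq] at hz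
      obtain ⟨rfl, hz⟩ := hz
      obtain ⟨x1, x2, y1, y2, rfl, rfl, h1, h2⟩ := ih z1 z2 hz
      exact ⟨a :: x1, x2, y1, y2, rfl, rfl, .left a h1, h2⟩
  | right a h ih =>
    intro z1 z2 hz
    cases z1 with
    | nil =>
      simp only [List.nil_append] at hz
      subst hz
      exact ⟨[], _, [], _, rfl, rfl, .nil, .right a h⟩
    | cons b z1 =>
      simp only [List.cons_append, List.cons.injEq] at hz
      obtain ⟨rfl, hz⟩ := hz
      obtain ⟨x1, x2, y1, y2, rfl, rfl, h1, h2⟩ := ih z1 z2 hz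
      exact ⟨x1, x2, a :: y1, y2, rfl, rfl, .right a h1, h2⟩

/-- If y is an interleaving of some word x with its reverse, then y is an
abelian square: y = uv with |u| = |v| and v a permutation of u. -/
theorem shuffle_reverse_abelianSquare {α : Type*} (x y : List α)
    (h : IsShuffle x x.reverse y) :
    ∃ u v : List α, y = u ++ v ∧ u.length = v.length ∧ u.Perm v := by
  set n := x.length with hn
  have hylen : y.length = 2 * n := by
    have := h.perm.length_eq
    simp at this
    omega
  refine ⟨y.take n, y.drop n, (List.take_append_drop n y).symm, ?_, ?_⟩
  · simp [hylen]; omega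
  · obtain ⟨x1, x2, y1, y2, hx, hxr, h1, h2⟩ :=
      h.split (y.take n) (y.drop n) (List.take_append_drop n y).symm
    have hl1 : x1.length + y1.length = n := by
      have := h1.perm.length_eq
      simp [hylen] at this
      omega
    have hlx : x1.length + x2.length = n := by
      have := congrArg List.length hx
      simpa [hn] using this.symm
    have hy1 : y1 = x2.reverse ∧ y2 = x1.reverse := by
      have : x2.reverse ++ x1.reverse = y1 ++ y2 := by
        rw [← List.reverse_append, ← hx, hxr]
      have hlen : x2.reverse.length = y1.length := by simp; omega
      obtain ⟨h1', h2'⟩ := List.append_inj this hlen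
      exact ⟨h1'.symm, h2'.symm⟩
    obtain ⟨rfl, rfl⟩ := hy1
    refine (h1.perm.trans ?_).trans (h2.perm.symm)
    have p1 : (x1 ++ x2.reverse).Perm (x1 ++ x2) :=
      List.Perm.append_left _ (List.reverse_perm _)
    have p2 : (x1 ++ x2).Perm (x2 ++ x1) := List.perm_append_comm
    have p3 : (x2 ++ x1).Perm (x2 ++ x1.reverse) :=
      List.Perm.append_left _ (List.reverse_perm _).symm
    exact (p1.trans p2).trans p3
end

section
/- Every binary abelian square y ∈ {0,1}* can be written as an element of x ∐ x^R for some word x; specifically, if the first half of y contains j 0's out of n letters, then y ∈ (0^j 1^{n-j}) ∐ (0^j 1^{n-j})^R. -/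
lemma fin2_cases (a : Fin 2) : a = 0 ∨ a = 1 := by omega

lemma length_eq_count01 (w : List (Fin 2)) : w.length = w.count 0 + w.count 1 := by
  induction w with
  | nil => simp
  | cons a l ih =>
    rcases fin2_cases a with h | h <;> subst h <;>
      simp [List.count_cons, ih] <;> omega

lemma shuffleA (w X Y z : List (Fin 2)) (h : IsShuffle X Y z) :
    IsShuffle (List.replicate (w.count 0) 0 ++ X)
      (List.replicate (w.count 1) 1 ++ Y) (w ++ z) := by
  induction w with
  | nil => simpa using h
  | cons a l ih =>
    rcases fin2_cases a with h' | h' <;> subst h'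
    · simpa [List.count_cons, List.replicate_succ] using IsShuffle.left (0 : Fin 2) ih
    · simpa [List.count_cons, List.replicate_succ] using IsShuffle.right (1 : Fin 2) ih

lemma shuffleB (w X Y z : List (Fin 2)) (h : IsShuffle X Y z) :
    IsShuffle (List.replicate (w.count 1) 1 ++ X)
      (List.replicate (w.count 0) 0 ++ Y) (w ++ z) := by
  induction w with
  | nil => simpa using h
  | cons a l ih =>
    rcases fin2_cases a with h' | h' <;> subst h'
    · simpa [List.count_cons, List.replicate_succ] using IsShuffle.right (0 : Fin 2) ih
    · simpa [List.count_cons, List.replicate_succ] using IsShuffle.left (1 : Fin 2) ih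

/-- Every binary abelian square y = u ++ v (|u| = |v|, equally many 0's) is an
interleaving of x = 0^j 1^(n-j) with its reverse, where n = |u| and j is the
number of 0's in u. -/
theorem binary_abelianSquare_shuffle_reverse (u v : List (Fin 2))
    (hlen : u.length = v.length) (hcount : u.count 0 = v.count 0) :
    ∃ x : List (Fin 2), x = List.replicate (u.count 0) 0 ++
        List.replicate (u.length - u.count 0) 1 ∧
      IsShuffle x x.reverse (u ++ v) := by
  have hc1 : u.length - u.count 0 = u.count 1 := by
    have := length_eq_count01 u; omega
  have hv1 : v.count 1 = u.count 1 := by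
    have h1 := length_eq_count01 u
    have h2 := length_eq_count01 v
    omega
  refine ⟨_, rfl, ?_⟩
  rw [hc1, List.reverse_append, List.reverse_replicate, List.reverse_replicate]
  have hbase : IsShuffle (List.replicate (u.count 1) 1 ++ [])
      (List.replicate (u.count 0) 0 ++ []) (v ++ []) := by
    rw [← hv1, hcount]
    exact shuffleB v [] [] [] IsShuffle.nil
  simp only [List.append_nil] at hbase
  have := shuffleA u (List.replicate (u.count 1) 1) (List.replicate (u.count 0) 0) v hbase
  simpa using this
end

section
/- A word y ∈ {0,1}* belongs to ⋃_{x ∈ {0,1}*} (x ∐ x^R) if and only if y is an abelian square. -/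
lemma IsShuffle.length_eq {α : Type*} {x y z : List α} (h : IsShuffle x y z) :
    z.length = x.length + y.length := by
  induction h <;> simp [*] <;> omega

lemma IsShuffle.count_eq {α : Type*} [DecidableEq α] {x y z : List α}
    (h : IsShuffle x y z) (a : α) :
    z.count a = x.count a + y.count a := by
  induction h <;> simp [List.count_cons, *] <;> omega

lemma IsShuffle.split_s13 {α : Type*} {x y z : List α} (h : IsShuffle x y z) (n : ℕ) :
    ∃ x₁ x₂ y₁ y₂, x = x₁ ++ x₂ ∧ y = y₁ ++ y₂ ∧
      IsShuffle x₁ y₁ (z.take n) ∧ IsShuffle x₂ y₂ (z.drop n) := by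
  induction h generalizing n with
  | nil =>
      exact ⟨[], [], [], [], rfl, rfl, by simpa using IsShuffle.nil,
        by simpa using IsShuffle.nil⟩
  | @left x y z a h ih =>
      cases n with
      | zero => exact ⟨[], a :: x, [], y, rfl, rfl, .nil, .left a h⟩
      | succ n =>
          obtain ⟨x₁, x₂, y₁, y₂, hx, hy, h₁, h₂⟩ := ih n
          exact ⟨a :: x₁, x₂, y₁, y₂, by rw [hx]; rfl, hy, .left a h₁, h₂⟩
  | @right x y z a h ih =>
      cases n with
      | zero => exact ⟨[], x, [], a :: y, rfl, rfl, .nil, .right a h⟩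
      | succ n =>
          obtain ⟨x₁, x₂, y₁, y₂, hx, hy, h₁, h₂⟩ := ih n
          exact ⟨x₁, x₂, a :: y₁, y₂, hx, by rw [hy]; rfl, .right a h₁, h₂⟩

lemma shuffle_build (c d : Fin 2) (hcd : c ≠ d) :
    ∀ (w x y z : List (Fin 2)), IsShuffle x y z →
      IsShuffle (List.replicate (w.count c) c ++ x)
        (List.replicate (w.count d) d ++ y) (w ++ z) := by
  intro w
  induction w with
  | nil => intro x y z h; simpa using h
  | cons a w ih =>
      intro x y z h
      have had : a = c ∨ a = d := by fin_cases a <;> fin_cases c <;> fin_cases d <;> simp_all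
      rcases had with rfl | rfl
      · have h1 : (a :: w).count a = w.count a + 1 := by simp [List.count_cons]
        have h2 : (a :: w).count d = w.count d := by simp [List.count_cons, hcd.symm, hcd]
        rw [h1, h2, List.replicate_succ, List.cons_append, List.cons_append]
        exact .left a (ih x y z h)
      · have h1 : (a :: w).count a = w.count a + 1 := by simp [List.count_cons]
        have h2 : (a :: w).count c = w.count c := by
          simp [List.count_cons]; exact fun h' => absurd h'.symm hcd
        rw [h1, h2, List.replicate_succ, List.cons_append, List.cons_append]
        exact .right a (ih x y z h)

lemma count_zero_add_count_one (l : List (Fin 2)) : l.count 0 + l.count 1 = l.length := by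
  induction l with
  | nil => simp
  | cons a l ih => fin_cases a <;> simp [List.count_cons, ← ih] <;> omega

/-- A binary word is an interleaving of some word with its reverse iff it is an
abelian square (y = uv with |u| = |v| and u, v having equally many 0's). -/
theorem shuffle_reverse_iff_abelianSquare (y : List (Fin 2)) :
    (∃ x : List (Fin 2), IsShuffle x x.reverse y) ↔
      ∃ u v : List (Fin 2), y = u ++ v ∧ u.length = v.length ∧
        u.count 0 = v.count 0 := by
  constructor
  · rintro ⟨x, h⟩
    set n := x.length with hn
    have hylen : y.length = n + n := by simpa using h.length_eq
    obtain ⟨x₁, x₂, b₁, b₂, hx, hb, h₁, h₂⟩ := h.split_s13 n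
    have hx1len : x₁.length + x₂.length = n := by rw [hn, hx]; simp
    have htake : (y.take n).length = n := by simp [hylen]
    have hb1len : b₁.length = x₂.length := by
      have := h₁.length_eq
      rw [htake] at this
      omega
    have hbeq : x.reverse = x₂.reverse ++ x₁.reverse := by rw [hx, List.reverse_append]
    have hb1 : b₁ = x₂.reverse ∧ b₂ = x₁.reverse := by
      have := hb.symm.trans hbeq
      have hlen' : b₁.length = x₂.reverse.length := by simpa using hb1len
      constructor
      · exact List.append_inj_left this hlen'
      · exact List.append_inj_right this hlen'
    refine ⟨y.take n, y.drop n, (List.take_append_drop n y).symm, ?_, ?_⟩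
    · simp [hylen]
    · have c1 := h₁.count_eq 0
      have c2 := h₂.count_eq 0
      rw [hb1.1] at c1
      rw [hb1.2] at c2
      simp only [List.count_reverse] at c1 c2
      omega
  · rintro ⟨u, v, rfl, hlen, hcount⟩
    have hc1 : u.count 1 = v.count 1 := by
      have := count_zero_add_count_one u
      have := count_zero_add_count_one v
      omega
    refine ⟨List.replicate (u.count 0) 0 ++ List.replicate (u.count 1) 1, ?_⟩
    have hrev : (List.replicate (u.count 0) (0 : Fin 2) ++
        List.replicate (u.count 1) 1).reverse =
        List.replicate (u.count 1) 1 ++ List.replicate (u.count 0) 0 := by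
      simp [List.reverse_append]
    rw [hrev]
    have base : IsShuffle (List.replicate (v.count 1) (1 : Fin 2) ++ [])
        (List.replicate (v.count 0) 0 ++ []) (v ++ []) :=
      shuffle_build 1 0 (by decide) v [] [] [] .nil
    simp only [List.append_nil] at base
    have main := shuffle_build 0 1 (by decide) u _ _ _ base
    rwa [← hc1, ← hcount] at main
end

section
/- The ternary word 012012 is an abelian square but cannot be written as an element of w ∐ w^R for any word w over {0,1,2}. -/
/-- Boolean shuffle check. -/
def shfB {α : Type*} [DecidableEq α] : List α → List α → List α → Bool
  | [], [], [] => true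
  | _, _, [] => false
  | x, y, c :: z =>
      (match x with | a :: x' => a = c && shfB x' y z | [] => false) ||
      (match y with | b :: y' => b = c && shfB x y' z | [] => false)

theorem IsShuffle.shfB_eq {α : Type*} [DecidableEq α] {x y z : List α}
    (h : IsShuffle x y z) : shfB x y z = true := by
  induction h with
  | nil => rfl
  | left a _ ih => rw [shfB.eq_def]; simp [ih]
  | right a _ ih => rw [shfB.eq_def]; simp [ih]

theorem IsShuffle.length {α : Type*} {x y z : List α}
    (h : IsShuffle x y z) : x.length + y.length = z.length := by
  induction h with
  | nil => rfl
  | left a _ ih => simp only [List.length_cons]; omega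
  | right a _ ih => simp only [List.length_cons]; omega

/-- The ternary word 012012 is an abelian square, yet it is not an interleaving
of any word with its reverse. -/
theorem word_012012 :
    (∃ u v : List (Fin 3), ([0, 1, 2, 0, 1, 2] : List (Fin 3)) = u ++ v ∧
        u.length = v.length ∧ u.Perm v) ∧
    ¬ ∃ w : List (Fin 3), IsShuffle w w.reverse [0, 1, 2, 0, 1, 2] := by
  constructor
  · exact ⟨[0, 1, 2], [0, 1, 2], rfl, rfl, List.Perm.refl _⟩
  · rintro ⟨w, h⟩
    have hl := h.length
    have hb := h.shfB_eq
    simp [List.length_reverse] at hl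
    have hw3 : w.length = 3 := by omega
    match w, hw3 with
    | [a, b, c], _ =>
      fin_cases a <;> fin_cases b <;> fin_cases c <;> simp_all [shfB]
end
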